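/- arXiv:2010.03857 — 9 statements merged into one kernel-verified Lean document; each statement's English description precedes it below -/
import Mathlib

section
/- Given reals $b, c \in [0,1]$ and $d \in (0,1]$ with $c + d \ge 1$, it holds that $b^c(c + d\, b^d) \ge b$. -/
theorem rpow_mul_ge (b c d : ℝ) (hb : b ∈ Set.Icc (0:ℝ) 1) (hc : c ∈ Set.Icc (0:ℝ) 1)
    (hd : d ∈ Set.Ioc (0:ℝ) 1) (hcd : c + d ≥ 1) :
    b ^ c * (c + d * b ^ d) ≥ b := by
  obtain ⟨hb0, hb1⟩ := hb
  obtain ⟨hc0, hc1⟩ := hc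
  obtain ⟨hd0, hd1⟩ := hd
  rcases eq_or_lt_of_le hb0 with rfl | hbpos
  · have h1 : (0:ℝ) ^ c ≥ 0 := Real.rpow_nonneg le_rfl c
    have h2 : (0:ℝ) ^ d ≥ 0 := Real.rpow_nonneg le_rfl d
    have h3 : c + d * (0:ℝ) ^ d ≥ 0 := by nlinarith
    nlinarith [mul_nonneg h1 h3]
  -- b > 0
  set s : ℝ := (1 - c) / d with hs_def
  have hs0 : 0 ≤ s := div_nonneg (by linarith) hd0.le
  have hs1 : s ≤ 1 := by
    rw [div_le_one hd0]; linarith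
  set t : ℝ := b ^ d with ht_def
  have ht0 : 0 < t := Real.rpow_pos_of_pos hbpos d
  have ht1 : t ≤ 1 := Real.rpow_le_one hb0 hb1 hd0.le
  -- Bernoulli: t ^ s ≤ 1 + s * (t - 1)
  have hbern : t ^ s ≤ 1 + s * (t - 1) := by
    have := rpow_one_add_le_one_add_mul_self (s := t - 1) (by linarith) hs0 hs1
    simpa using this
  -- 1 + s * (t - 1) ≤ c + d * t
  have hkey : 1 + s * (t - 1) ≤ c + d * t := by
    have hcs : c + s - 1 = (1 - c) * (1 - d) / d := by
      field_simp [hs_def]; rw [hs_def, sub_mul, add_mul, div_mul_cancel₀ _ (ne_of_gt hd0)]; ring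
    have hcs0 : 0 ≤ c + s - 1 := by
      rw [hcs]
      exact div_nonneg (mul_nonneg (by linarith) (by linarith)) hd0.le
    rcases le_or_gt s d with h | h
    · nlinarith
    · nlinarith
  have hpow : t ^ s = b ^ (1 - c) := by
    rw [ht_def, ← Real.rpow_mul hb0]
    congr 1
    rw [hs_def, mul_div_cancel₀ _ (ne_of_gt hd0)]
  have h1c : b ^ (1 - c) ≤ c + d * t := hpow ▸ (hbern.trans hkey)
  have hsplit : b ^ c * b ^ (1 - c) = b := by
    rw [← Real.rpow_add hbpos]; simp
  calc b = b ^ c * b ^ (1 - c) := hsplit.symm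
    _ ≤ b ^ c * (c + d * t) :=
        mul_le_mul_of_nonneg_left h1c (Real.rpow_nonneg hb0 c)
end

section
/- Let $\eta > 0$, $C > 0$, and suppose that at each step $t = 1,\dots,T$ and each index $d = 1,\dots,D_t$ the learner's loss satisfies $\lambda_{t,d}^{\gamma} \le -\frac{C}{\eta} \ln \sum_{i=1}^N w_{t-1}^*(i) e^{-\eta \lambda_{t,d}(i)}$, where $w_{t-1}^*(i) = w_{t-1}(i)/\sum_j w_{t-1}(j)$ with $w_0(i) > 0$ and $w_t(i) = w_{t-1}(i) e^{-(\eta/D_t)\sum_{d=1}^{D_t} \lambda_{t,d}(i)}$, and all $\lambda_{t,d}(i) \ge 0$. Then for every expert $i$, $\sum_{t=1}^T \frac{1}{D_t}\sum_{d=1}^{D_t} \lambda_{t,d}^{\gamma} \le C \sum_{t=1}^T \frac{1}{D_t} \sum_{d=1}^{D_t} \lambda_{t,d}(i) + \frac{C}{\eta} \ln \frac{1}{w_0^*(i)}$, where $w_0^*(i) = w_0(i)/\sum_j w_0(j)$. -/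
open Finset Real

/-- Generalized Hölder with equal weights `1/D`. -/
lemma aap_holder (N D : ℕ) (hN : 1 ≤ N) (hD : 1 ≤ D) (a : ℕ → Fin N → ℝ)
    (ha : ∀ d i, 0 < a d i) :
    ∑ i, ∏ d ∈ Finset.range D, (a d i) ^ ((D : ℝ)⁻¹) ≤
      ∏ d ∈ Finset.range D, (∑ i, a d i) ^ ((D : ℝ)⁻¹) := by
  haveI : Nonempty (Fin N) := Fin.pos_iff_nonempty.mp (by omega)
  have hDpos : (0 : ℝ) < D := by exact_mod_cast hD
  have hT : ∀ d, 0 < ∑ i, a d i := fun d =>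
    Finset.sum_pos (fun i _ => ha d i) Finset.univ_nonempty
  have hP : 0 < ∏ d ∈ Finset.range D, (∑ i, a d i) ^ ((D : ℝ)⁻¹) :=
    Finset.prod_pos fun d _ => Real.rpow_pos_of_pos (hT d) _
  -- pointwise AM-GM
  have key : ∀ i : Fin N,
      ∏ d ∈ Finset.range D, (a d i / ∑ j, a d j) ^ ((D : ℝ)⁻¹) ≤
        ∑ d ∈ Finset.range D, (D : ℝ)⁻¹ * (a d i / ∑ j, a d j) := by
    intro i
    exact Real.geom_mean_le_arith_mean_weighted _ (fun _ => (D : ℝ)⁻¹)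
      (fun d => a d i / ∑ j, a d j)
      (fun _ _ => by positivity)
      (by simp [Finset.sum_const]; field_simp)
      (fun d _ => le_of_lt (div_pos (ha d i) (hT d)))
  have hsum : ∑ i, ∏ d ∈ Finset.range D, (a d i / ∑ j, a d j) ^ ((D : ℝ)⁻¹) ≤ 1 := by
    calc ∑ i, ∏ d ∈ Finset.range D, (a d i / ∑ j, a d j) ^ ((D : ℝ)⁻¹)
        ≤ ∑ i : Fin N, ∑ d ∈ Finset.range D, (D : ℝ)⁻¹ * (a d i / ∑ j, a d j) :=
          Finset.sum_le_sum fun i _ => key i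
      _ = ∑ d ∈ Finset.range D, (D : ℝ)⁻¹ * ((∑ i, a d i) / ∑ j, a d j) := by
          rw [Finset.sum_comm]
          refine Finset.sum_congr rfl fun d _ => ?_
          rw [← Finset.mul_sum, ← Finset.sum_div]
      _ = 1 := by
          have : ∀ d ∈ Finset.range D, (D : ℝ)⁻¹ * ((∑ i, a d i) / ∑ j, a d j)
              = (D : ℝ)⁻¹ := fun d _ => by
            rw [div_self (ne_of_gt (hT d)), mul_one]
          rw [Finset.sum_congr rfl this, Finset.sum_const]
          simp; field_simp
  have hfactor : ∀ i : Fin N,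
      ∏ d ∈ Finset.range D, (a d i / ∑ j, a d j) ^ ((D : ℝ)⁻¹) =
        (∏ d ∈ Finset.range D, (a d i) ^ ((D : ℝ)⁻¹)) /
          (∏ d ∈ Finset.range D, (∑ j, a d j) ^ ((D : ℝ)⁻¹)) := by
    intro i
    rw [← Finset.prod_div_distrib]
    refine Finset.prod_congr rfl fun d _ => ?_
    rw [Real.div_rpow (le_of_lt (ha d i)) (le_of_lt (hT d))]
  calc ∑ i, ∏ d ∈ Finset.range D, (a d i) ^ ((D : ℝ)⁻¹)
      = (∑ i, ∏ d ∈ Finset.range D, (a d i / ∑ j, a d j) ^ ((D : ℝ)⁻¹)) *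
          ∏ d ∈ Finset.range D, (∑ j, a d j) ^ ((D : ℝ)⁻¹) := by
        rw [Finset.sum_mul]
        refine Finset.sum_congr rfl fun i _ => ?_
        rw [hfactor i, div_mul_cancel₀]
        exact ne_of_gt hP
    _ ≤ 1 * ∏ d ∈ Finset.range D, (∑ j, a d j) ^ ((D : ℝ)⁻¹) :=
        mul_le_mul_of_nonneg_right hsum (le_of_lt hP)
    _ = _ := one_mul _

lemma aap_telescope (f : ℕ → ℝ) (T : ℕ) :
    ∑ t ∈ Finset.Icc 1 T, (f t - f (t - 1)) = f T - f 0 := by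
  induction T with
  | zero => simp
  | succ n ih =>
    rw [Finset.sum_Icc_succ_top (by omega), ih]
    simp

theorem aap_current_bound (N T : ℕ) (hN : 1 ≤ N) (D : ℕ → ℕ) (hD : ∀ t, 1 ≤ D t)
    (η C : ℝ) (hη : 0 < η) (hC : 0 < C)
    (lossE : ℕ → ℕ → Fin N → ℝ) (hlossE : ∀ t d i, 0 ≤ lossE t d i)
    (lossL : ℕ → ℕ → ℝ)
    (w : ℕ → Fin N → ℝ) (hw0 : ∀ i, 0 < w 0 i)
    (hrec : ∀ t, 1 ≤ t → t ≤ T → ∀ i,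
      w t i = w (t - 1) i *
        Real.exp (-(η / D t) * ∑ d ∈ Finset.range (D t), lossE t d i))
    (hmix : ∀ t, 1 ≤ t → t ≤ T → ∀ d < D t,
      lossL t d ≤ -(C / η) *
        Real.log (∑ i, (w (t - 1) i / ∑ j, w (t - 1) j) *
          Real.exp (-η * lossE t d i)))
    (i : Fin N) :
    ∑ t ∈ Finset.Icc 1 T, (1 / (D t : ℝ)) * ∑ d ∈ Finset.range (D t), lossL t d ≤
      C * ∑ t ∈ Finset.Icc 1 T, (1 / (D t : ℝ)) * ∑ d ∈ Finset.range (D t), lossE t d i +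
        (C / η) * Real.log (1 / (w 0 i / ∑ j, w 0 j)) := by
  haveI : Nonempty (Fin N) := Fin.pos_iff_nonempty.mp (by omega)
  have hCη : 0 < C / η := div_pos hC hη
  -- positivity of weights
  have wpos : ∀ t, t ≤ T → ∀ j, 0 < w t j := by
    intro t
    induction t with
    | zero => intro _ j; exact hw0 j
    | succ n ih =>
      intro hn j
      rw [hrec (n + 1) (by omega) hn j]
      simp only [Nat.add_sub_cancel]
      exact mul_pos (ih (by omega) j) (Real.exp_pos _)
  have Wpos : ∀ t, t ≤ T → 0 < ∑ j, w t j := fun t ht =>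
    Finset.sum_pos (fun j _ => wpos t ht j) Finset.univ_nonempty
  -- per-step inequality
  have step : ∀ t, 1 ≤ t → t ≤ T →
      (1 / (D t : ℝ)) * ∑ d ∈ Finset.range (D t), lossL t d ≤
        -(C / η) * (Real.log (∑ j, w t j) - Real.log (∑ j, w (t - 1) j)) := by
    intro t ht1 htT
    have hDpos : (0 : ℝ) < D t := by exact_mod_cast hD t
    set S : ℕ → ℝ := fun d => ∑ i, (w (t - 1) i / ∑ j, w (t - 1) j) *
      Real.exp (-η * lossE t d i) with hS
    have hSpos : ∀ d, 0 < S d := fun d =>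
      Finset.sum_pos (fun i _ => mul_pos (div_pos (wpos (t-1) (by omega) i)
        (Wpos (t-1) (by omega))) (Real.exp_pos _)) Finset.univ_nonempty
    -- learner loss bound
    have h1 : ∑ d ∈ Finset.range (D t), lossL t d ≤
        ∑ d ∈ Finset.range (D t), (-(C / η) * Real.log (S d)) :=
      Finset.sum_le_sum fun d hd => hmix t ht1 htT d (Finset.mem_range.mp hd)
    -- Hölder: log W_t ≤ log W_{t-1} + (1/D) ∑ log S_d
    have hW : ∑ j, w t j ≤ ∏ d ∈ Finset.range (D t),
        (∑ j, w (t - 1) j * Real.exp (-η * lossE t d j)) ^ ((D t : ℝ)⁻¹) := by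
      have := aap_holder N (D t) hN (hD t)
        (fun d j => w (t - 1) j * Real.exp (-η * lossE t d j))
        (fun d j => mul_pos (wpos (t-1) (by omega) j) (Real.exp_pos _))
      refine le_trans (le_of_eq ?_) this
      refine Finset.sum_congr rfl fun j _ => ?_
      rw [hrec t ht1 htT j]
      have hwj := wpos (t-1) (by omega) j
      have : ∀ d ∈ Finset.range (D t),
          (w (t - 1) j * Real.exp (-η * lossE t d j)) ^ ((D t : ℝ)⁻¹) =
            (w (t - 1) j) ^ ((D t : ℝ)⁻¹) * Real.exp (-η * lossE t d j * (D t : ℝ)⁻¹) :=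
        fun d _ => by
          rw [Real.mul_rpow (le_of_lt hwj) (le_of_lt (Real.exp_pos _)),
            ← Real.exp_log (Real.exp_pos (-η * lossE t d j)),
            ← Real.exp_mul, Real.log_exp]
      rw [Finset.prod_congr rfl this, Finset.prod_mul_distrib, Finset.prod_const,
        Finset.card_range,
        ← Real.rpow_natCast ((w (t-1) j) ^ ((D t : ℝ)⁻¹)), ← Real.rpow_mul (le_of_lt hwj),
        inv_mul_cancel₀ (ne_of_gt hDpos), Real.rpow_one, ← Real.exp_sum]
      congr 1
      simp only [Finset.mul_sum, Finset.sum_mul]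
      congr 1
      exact Finset.sum_congr rfl fun d _ => by ring
    have hTd : ∀ d, 0 < ∑ j, w (t - 1) j * Real.exp (-η * lossE t d j) := fun d =>
      Finset.sum_pos (fun j _ => mul_pos (wpos (t-1) (by omega) j) (Real.exp_pos _))
        Finset.univ_nonempty
    have hTS : ∀ d, ∑ j, w (t - 1) j * Real.exp (-η * lossE t d j) =
        (∑ j, w (t - 1) j) * S d := by
      intro d
      rw [hS, Finset.mul_sum]
      refine Finset.sum_congr rfl fun j _ => ?_
      have hWne : (∑ j, w (t - 1) j) ≠ 0 := ne_of_gt (Wpos (t-1) (by omega))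
      field_simp
    have hlog : Real.log (∑ j, w t j) - Real.log (∑ j, w (t - 1) j) ≤
        (D t : ℝ)⁻¹ * ∑ d ∈ Finset.range (D t), Real.log (S d) := by
      have h2 : Real.log (∑ j, w t j) ≤
          ∑ d ∈ Finset.range (D t), (D t : ℝ)⁻¹ *
            Real.log (∑ j, w (t - 1) j * Real.exp (-η * lossE t d j)) := by
        calc Real.log (∑ j, w t j)
            ≤ Real.log (∏ d ∈ Finset.range (D t),
                (∑ j, w (t - 1) j * Real.exp (-η * lossE t d j)) ^ ((D t : ℝ)⁻¹)) :=
              Real.log_le_log (Wpos t htT) hW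
          _ = ∑ d ∈ Finset.range (D t), (D t : ℝ)⁻¹ *
                Real.log (∑ j, w (t - 1) j * Real.exp (-η * lossE t d j)) := by
              rw [Real.log_prod (fun d _ =>
                ne_of_gt (Real.rpow_pos_of_pos (hTd d) _))]
              refine Finset.sum_congr rfl fun d _ => ?_
              rw [Real.log_rpow (hTd d)]
      have h3 : ∑ d ∈ Finset.range (D t), (D t : ℝ)⁻¹ *
            Real.log (∑ j, w (t - 1) j * Real.exp (-η * lossE t d j)) =
          Real.log (∑ j, w (t - 1) j) +
            (D t : ℝ)⁻¹ * ∑ d ∈ Finset.range (D t), Real.log (S d) := by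
        have : ∀ d ∈ Finset.range (D t), (D t : ℝ)⁻¹ *
            Real.log (∑ j, w (t - 1) j * Real.exp (-η * lossE t d j)) =
              (D t : ℝ)⁻¹ * Real.log (∑ j, w (t - 1) j) +
                (D t : ℝ)⁻¹ * Real.log (S d) := fun d _ => by
          rw [hTS d, Real.log_mul (ne_of_gt (Wpos (t-1) (by omega)))
            (ne_of_gt (hSpos d)), mul_add]
        rw [Finset.sum_congr rfl this, Finset.sum_add_distrib, Finset.sum_const,
          ← Finset.mul_sum]
        congr 1
        simp only [Finset.card_range, nsmul_eq_mul]
        field_simp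
      linarith [h2, h3.le, h3.ge]
    calc (1 / (D t : ℝ)) * ∑ d ∈ Finset.range (D t), lossL t d
        ≤ (1 / (D t : ℝ)) * ∑ d ∈ Finset.range (D t), (-(C / η) * Real.log (S d)) :=
          mul_le_mul_of_nonneg_left h1 (by positivity)
      _ = -(C / η) * ((D t : ℝ)⁻¹ * ∑ d ∈ Finset.range (D t), Real.log (S d)) := by
          rw [← Finset.mul_sum]; ring
      _ ≤ -(C / η) * (Real.log (∑ j, w t j) - Real.log (∑ j, w (t - 1) j)) := by
          have := mul_le_mul_of_nonneg_left hlog (le_of_lt hCη)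
          linarith
  -- sum up and telescope
  have main : ∑ t ∈ Finset.Icc 1 T, (1 / (D t : ℝ)) * ∑ d ∈ Finset.range (D t), lossL t d ≤
      -(C / η) * (Real.log (∑ j, w T j) - Real.log (∑ j, w 0 j)) := by
    calc ∑ t ∈ Finset.Icc 1 T, (1 / (D t : ℝ)) * ∑ d ∈ Finset.range (D t), lossL t d
        ≤ ∑ t ∈ Finset.Icc 1 T,
            (-(C / η) * (Real.log (∑ j, w t j) - Real.log (∑ j, w (t - 1) j))) :=
          Finset.sum_le_sum fun t ht => step t (Finset.mem_Icc.mp ht).1 (Finset.mem_Icc.mp ht).2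
      _ = -(C / η) * ∑ t ∈ Finset.Icc 1 T,
            ((fun s => Real.log (∑ j, w s j)) t - (fun s => Real.log (∑ j, w s j)) (t - 1)) := by
          rw [Finset.mul_sum]
      _ = -(C / η) * (Real.log (∑ j, w T j) - Real.log (∑ j, w 0 j)) := by
          rw [aap_telescope (fun s => Real.log (∑ j, w s j)) T]
  -- formula for w T i
  have wform : ∀ t, t ≤ T → w t i = w 0 i *
      Real.exp (-η * ∑ s ∈ Finset.Icc 1 t, (1 / (D s : ℝ)) * ∑ d ∈ Finset.range (D s), lossE s d i) := by
    intro t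
    induction t with
    | zero => intro _; simp
    | succ n ih =>
      intro hn
      rw [hrec (n + 1) (by omega) hn i]
      simp only [Nat.add_sub_cancel]
      rw [ih (by omega), mul_assoc, ← Real.exp_add,
        Finset.sum_Icc_succ_top (by omega : 1 ≤ n + 1)]
      congr 2
      have : (0 : ℝ) < D (n + 1) := by exact_mod_cast hD (n + 1)
      field_simp
      ring
  have hwT : w 0 i * Real.exp (-η * ∑ s ∈ Finset.Icc 1 T,
      (1 / (D s : ℝ)) * ∑ d ∈ Finset.range (D s), lossE s d i) ≤ ∑ j, w T j := by
    rw [← wform T le_rfl]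
    exact Finset.single_le_sum (fun j _ => le_of_lt (wpos T le_rfl j)) (Finset.mem_univ i)
  -- final bound
  set L := ∑ s ∈ Finset.Icc 1 T, (1 / (D s : ℝ)) * ∑ d ∈ Finset.range (D s), lossE s d i with hL
  have hlogT : Real.log (w 0 i) + (-η * L) ≤ Real.log (∑ j, w T j) := by
    have := Real.log_le_log (mul_pos (hw0 i) (Real.exp_pos _)) hwT
    rwa [Real.log_mul (ne_of_gt (hw0 i)) (ne_of_gt (Real.exp_pos _)), Real.log_exp] at this
  have hfin : -(C / η) * (Real.log (∑ j, w T j) - Real.log (∑ j, w 0 j)) ≤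
      C * L + (C / η) * (Real.log (∑ j, w 0 j) - Real.log (w 0 i)) := by
    have h4 : -(C / η) * (Real.log (∑ j, w T j) - Real.log (∑ j, w 0 j)) ≤
        -(C / η) * (Real.log (w 0 i) + (-η * L) - Real.log (∑ j, w 0 j)) := by
      have := mul_le_mul_of_nonneg_left hlogT (le_of_lt hCη)
      linarith
    have h5 : -(C / η) * (Real.log (w 0 i) + (-η * L) - Real.log (∑ j, w 0 j)) =
        C * L + (C / η) * (Real.log (∑ j, w 0 j) - Real.log (w 0 i)) := by
      field_simp
      ring
    linarith
  have hrhs : Real.log (1 / (w 0 i / ∑ j, w 0 j)) =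
      Real.log (∑ j, w 0 j) - Real.log (w 0 i) := by
    rw [one_div, Real.log_inv, Real.log_div (ne_of_gt (hw0 i)) (ne_of_gt (Wpos 0 (by omega)))]
    ring
  rw [hrhs]
  exact le_trans main hfin
end

section
/- (Fixed-share regret under delayed feedback.) Consider $N \ge 2$ experts with nonnegative average losses $\ell_t(i)$ at steps $t = 1,\dots,T$, weights initialized as $\tilde w_0(i) = 1/N$ and updated by $w_t(i) = \tilde w_{t-1}(i) e^{-\eta \ell_t(i)}$ followed by the Fixed-share update $\tilde w_t(i) = (1-\alpha) w_t(i) + \frac{\alpha}{N-1} \sum_{j\ne i} w_t(j)$, with $\eta > 0$ and $\alpha \in (0,1)$. Suppose the learner's average loss at each step satisfies $\ell_t^{\gamma} \le -\frac{C}{\eta} \ln \frac{\sum_i w_t(i)}{\sum_i \tilde w_{t-1}(i)}$ for some $C > 0$. Then for any superexpert determined by switch times $1 = t_0 < t_1 < \dots < t_{k+1} = T+1$ and experts $e_0, \dots, e_k$ with $e_{j} \ne e_{j+1}$, whose loss on step $t \in [t_j, t_{j+1})$ is $\ell_t(e_j)$, it holds that $\sum_{t=1}^T \ell_t^{\gamma}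 \le C \sum_{j=0}^{k} \sum_{t=t_j}^{t_{j+1}-1} \ell_t(e_j) + \frac{C}{\eta}\left( \ln N + k \ln \frac{N-1}{\alpha} + (T-1-k) \ln \frac{1}{1-\alpha} \right)$. -/
theorem fixed_share_regret (N T k : ℕ) (hN : 2 ≤ N) (η α C : ℝ)
    (hη : 0 < η) (hα : α ∈ Set.Ioo (0:ℝ) 1) (hC : 0 < C)
    (ℓ : ℕ → Fin N → ℝ) (hℓ : ∀ t i, 0 ≤ ℓ t i)
    (w wt : ℕ → Fin N → ℝ)
    (hinit : ∀ i, wt 0 i = 1 / N)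
    (hw : ∀ t, 1 ≤ t → ∀ i, w t i = wt (t - 1) i * Real.exp (-η * ℓ t i))
    (hwt : ∀ t, 1 ≤ t → ∀ i,
      wt t i = (1 - α) * w t i + (α / (N - 1)) * ∑ j ∈ Finset.univ \ {i}, w t j)
    (ℓγ : ℕ → ℝ)
    (hlearner : ∀ t, 1 ≤ t → t ≤ T →
      ℓγ t ≤ -(C / η) * Real.log ((∑ i, w t i) / (∑ i, wt (t - 1) i)))
    (tseq : ℕ → ℕ) (e : ℕ → Fin N)
    (ht0 : tseq 0 = 1) (htk : tseq (k + 1) = T + 1)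
    (hmono : ∀ j, j ≤ k → tseq j < tseq (j + 1))
    (he : ∀ j, j < k → e j ≠ e (j + 1)) :
    ∑ t ∈ Finset.Icc 1 T, ℓγ t ≤
      C * ∑ j ∈ Finset.range (k + 1), ∑ t ∈ Finset.Ico (tseq j) (tseq (j + 1)), ℓ t (e j) +
        (C / η) * (Real.log N + k * Real.log ((N - 1) / α) +
          ((T : ℝ) - 1 - k) * Real.log (1 / (1 - α))) := by
  obtain ⟨hα0, hα1⟩ := hα
  have hNr : (2:ℝ) ≤ (N:ℝ) := by exact_mod_cast hN
  have hN0 : (0:ℝ) < N := by linarith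
  have hN1 : (0:ℝ) < (N:ℝ) - 1 := by linarith
  have h1α : (0:ℝ) < 1 - α := by linarith
  have hαN : 0 < α / ((N:ℝ) - 1) := div_pos hα0 hN1
  have hne : Nonempty (Fin N) := ⟨⟨0, by omega⟩⟩
  -- positivity of weights
  have hwtpos : ∀ t, ∀ i, 0 < wt t i := by
    intro t
    induction t with
    | zero => intro i; rw [hinit]; positivity
    | succ n ih =>
      have hwp : ∀ j, 0 < w (n+1) j := by
        intro j
        rw [hw (n+1) (by omega) j]
        simp only [Nat.add_sub_cancel]
        exact mul_pos (ih j) (Real.exp_pos _)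
      intro i
      rw [hwt (n+1) (by omega) i]
      have h1 : (0:ℝ) ≤ ∑ j ∈ Finset.univ \ {i}, w (n+1) j :=
        Finset.sum_nonneg fun j _ => (hwp j).le
      have h2 := mul_pos h1α (hwp i)
      nlinarith [mul_nonneg hαN.le h1]
  have hwpos : ∀ t, 1 ≤ t → ∀ i, 0 < w t i := by
    intro t ht i
    rw [hw t ht i]
    exact mul_pos (hwtpos _ _) (Real.exp_pos _)
  -- fixed share preserves total weight
  have hWeq : ∀ t, 1 ≤ t → ∑ i, wt t i = ∑ i, w t i := by
    intro t ht
    have key : ∀ i : Fin N, wt t i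
        = (1-α) * w t i + (α/((N:ℝ)-1)) * ((∑ j, w t j) - w t i) := by
      intro i
      rw [hwt t ht i, Finset.sum_sdiff_eq_sub (Finset.subset_univ _), Finset.sum_singleton]
    rw [Finset.sum_congr rfl (fun i _ => key i)]
    rw [Finset.sum_add_distrib, ← Finset.mul_sum, ← Finset.mul_sum,
      Finset.sum_sub_distrib, Finset.sum_const, Finset.card_univ, Fintype.card_fin,
      nsmul_eq_mul]
    field_simp
    ring
  -- stay bound
  have hstay : ∀ t, 1 ≤ t → ∀ i, (1-α) * w t i ≤ wt t i := by
    intro t ht i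
    rw [hwt t ht i]
    have h1 : (0:ℝ) ≤ (α/((N:ℝ)-1)) * ∑ j ∈ Finset.univ \ {i}, w t j :=
      mul_nonneg hαN.le (Finset.sum_nonneg fun j _ => (hwpos t ht j).le)
    linarith
  -- switch bound
  have hswitch : ∀ t, 1 ≤ t → ∀ i i' : Fin N, i ≠ i' →
      (α/((N:ℝ)-1)) * w t i ≤ wt t i' := by
    intro t ht i i' hnei
    rw [hwt t ht i']
    have h1 : (0:ℝ) ≤ (1-α) * w t i' := mul_nonneg h1α.le (hwpos t ht i').le
    have h2 : w t i ≤ ∑ j ∈ Finset.univ \ {i'}, w t j := by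
      apply Finset.single_le_sum (f := w t) (fun j _ => (hwpos t ht j).le)
      simp [hnei]
    nlinarith
  -- segment lemma
  have hseg : ∀ (a : ℕ), 1 ≤ a → ∀ (m : ℕ) (i : Fin N),
      wt (a-1) i * (1-α)^m * Real.exp (-η * ∑ t ∈ Finset.Icc a (a+m), ℓ t i)
        ≤ w (a+m) i := by
    intro a ha m
    induction m with
    | zero =>
      intro i
      simp only [Nat.add_zero, Finset.Icc_self, Finset.sum_singleton, pow_zero, mul_one]
      rw [hw a ha i]
    | succ n ih =>
      intro i
      have hrec : w (a+(n+1)) i = wt (a+n) i * Real.exp (-η * ℓ (a+n+1) i) := by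
        have h := hw (a+n+1) (by omega) i
        rw [show a+(n+1) = a+n+1 by omega]
        simpa using h
      have hsum : ∑ t ∈ Finset.Icc a (a+(n+1)), ℓ t i
          = (∑ t ∈ Finset.Icc a (a+n), ℓ t i) + ℓ (a+n+1) i := by
        rw [show a+(n+1) = (a+n)+1 by omega, Finset.sum_Icc_succ_top (by omega)]
      have step1 : wt (a-1) i * (1-α)^n * Real.exp (-η * ∑ t ∈ Finset.Icc a (a+n), ℓ t i)
          ≤ w (a+n) i := ih i
      have step2 : (1-α) * w (a+n) i ≤ wt (a+n) i := hstay (a+n) (by omega) i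
      have hE : (0:ℝ) < Real.exp (-η * ℓ (a+n+1) i) := Real.exp_pos _
      calc wt (a-1) i * (1-α)^(n+1) *
            Real.exp (-η * ∑ t ∈ Finset.Icc a (a+(n+1)), ℓ t i)
          = ((1-α) * (wt (a-1) i * (1-α)^n *
              Real.exp (-η * ∑ t ∈ Finset.Icc a (a+n), ℓ t i))) *
              Real.exp (-η * ℓ (a+n+1) i) := by
            rw [hsum, mul_add, Real.exp_add]; ring
        _ ≤ ((1-α) * w (a+n) i) * Real.exp (-η * ℓ (a+n+1) i) := by
            apply mul_le_mul_of_nonneg_right _ hE.le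
            exact mul_le_mul_of_nonneg_left step1 h1α.le
        _ ≤ wt (a+n) i * Real.exp (-η * ℓ (a+n+1) i) :=
            mul_le_mul_of_nonneg_right step2 hE.le
        _ = w (a+(n+1)) i := hrec.symm
  -- lower bound on tseq
  have htlb : ∀ j, j ≤ k+1 → j + 1 ≤ tseq j := by
    intro j
    induction j with
    | zero => intro _; omega
    | succ n ih =>
      intro h
      have h1 := hmono n (by omega)
      have h2 := ih (by omega)
      omega
  -- main induction along segments
  have hQ : ∀ j, j ≤ k →
      (1/(N:ℝ)) * (α/((N:ℝ)-1))^j * (1-α)^(tseq j - 1 - j) *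
        Real.exp (-η * ∑ m ∈ Finset.range j,
          ∑ t ∈ Finset.Ico (tseq m) (tseq (m+1)), ℓ t (e m))
      ≤ wt (tseq j - 1) (e j) := by
    intro j
    induction j with
    | zero =>
      intro _
      simp [ht0, hinit]
    | succ n ih =>
      intro h
      have hn : n ≤ k := by omega
      have ihn := ih hn
      have ha : 1 ≤ tseq n := by have := htlb n (by omega); omega
      have hab : tseq n < tseq (n+1) := hmono n hn
      have han : n + 1 ≤ tseq n := htlb n (by omega)
      have hbn : n + 2 ≤ tseq (n+1) := htlb (n+1) (by omega)
      have hm : tseq n + (tseq (n+1) - 1 - tseq n) = tseq (n+1) - 1 := by omega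
      have hseg' := hseg (tseq n) ha (tseq (n+1) - 1 - tseq n) (e n)
      rw [hm] at hseg'
      have hIco : Finset.Icc (tseq n) (tseq (n+1) - 1)
          = Finset.Ico (tseq n) (tseq (n+1)) := by
        rw [← Finset.Ico_add_one_right_eq_Icc]
        congr 1
        omega
      rw [hIco] at hseg'
      have hb1 : 1 ≤ tseq (n+1) - 1 := by omega
      have hsw := hswitch (tseq (n+1) - 1) hb1 (e n) (e (n+1)) (he n (by omega))
      have hpow : (1-α)^(tseq (n+1) - 1 - (n+1))
          = (1-α)^(tseq n - 1 - n) * (1-α)^(tseq (n+1) - 1 - tseq n) := by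
        rw [← pow_add]
        congr 1
        omega
      have hEsum : Real.exp (-η * ∑ m ∈ Finset.range (n+1),
            ∑ t ∈ Finset.Ico (tseq m) (tseq (m+1)), ℓ t (e m))
          = Real.exp (-η * ∑ m ∈ Finset.range n,
              ∑ t ∈ Finset.Ico (tseq m) (tseq (m+1)), ℓ t (e m)) *
            Real.exp (-η * ∑ t ∈ Finset.Ico (tseq n) (tseq (n+1)), ℓ t (e n)) := by
        rw [← Real.exp_add, Finset.sum_range_succ]
        congr 1
        ring
      have hEpos : (0:ℝ) < Real.exp (-η * ∑ t ∈ Finset.Ico (tseq n) (tseq (n+1)), ℓ t (e n)) :=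
        Real.exp_pos _
      have hfac : (0:ℝ) ≤ (1-α)^(tseq (n+1) - 1 - tseq n) *
          Real.exp (-η * ∑ t ∈ Finset.Ico (tseq n) (tseq (n+1)), ℓ t (e n)) :=
        mul_nonneg (pow_nonneg h1α.le _) hEpos.le
      calc (1/(N:ℝ)) * (α/((N:ℝ)-1))^(n+1) * (1-α)^(tseq (n+1) - 1 - (n+1)) *
            Real.exp (-η * ∑ m ∈ Finset.range (n+1),
              ∑ t ∈ Finset.Ico (tseq m) (tseq (m+1)), ℓ t (e m))
          = (α/((N:ℝ)-1)) * (((1/(N:ℝ)) * (α/((N:ℝ)-1))^n * (1-α)^(tseq n - 1 - n) *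
              Real.exp (-η * ∑ m ∈ Finset.range n,
                ∑ t ∈ Finset.Ico (tseq m) (tseq (m+1)), ℓ t (e m))) *
              ((1-α)^(tseq (n+1) - 1 - tseq n) *
                Real.exp (-η * ∑ t ∈ Finset.Ico (tseq n) (tseq (n+1)), ℓ t (e n)))) := by
            rw [hpow, hEsum]; ring
        _ ≤ (α/((N:ℝ)-1)) * (wt (tseq n - 1) (e n) *
              ((1-α)^(tseq (n+1) - 1 - tseq n) *
                Real.exp (-η * ∑ t ∈ Finset.Ico (tseq n) (tseq (n+1)), ℓ t (e n)))) := by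
            apply mul_le_mul_of_nonneg_left _ hαN.le
            exact mul_le_mul_of_nonneg_right ihn hfac
        _ ≤ (α/((N:ℝ)-1)) * w (tseq (n+1) - 1) (e n) := by
            apply mul_le_mul_of_nonneg_left _ hαN.le
            calc wt (tseq n - 1) (e n) *
                  ((1-α)^(tseq (n+1) - 1 - tseq n) *
                    Real.exp (-η * ∑ t ∈ Finset.Ico (tseq n) (tseq (n+1)), ℓ t (e n)))
                = wt (tseq n - 1) (e n) * (1-α)^(tseq (n+1) - 1 - tseq n) *
                    Real.exp (-η * ∑ t ∈ Finset.Ico (tseq n) (tseq (n+1)), ℓ t (e n)) := by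
                  ring
              _ ≤ w (tseq (n+1) - 1) (e n) := hseg'
        _ ≤ wt (tseq (n+1) - 1) (e (n+1)) := hsw
  -- global time bound
  have hTk : k + 1 ≤ T := by have := htlb (k+1) le_rfl; omega
  -- notation for comparator loss
  set L : ℝ := ∑ j ∈ Finset.range (k + 1),
    ∑ t ∈ Finset.Ico (tseq j) (tseq (j + 1)), ℓ t (e j) with hL
  have hLnn : 0 ≤ L :=
    Finset.sum_nonneg fun j _ => Finset.sum_nonneg fun t _ => hℓ t (e j)
  -- final lower bound on w T (e k)
  have hak : 1 ≤ tseq k := by have := htlb k (by omega); omega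
  have hsegk := hseg (tseq k) hak (T - tseq k) (e k)
  have hTa : tseq k + (T - tseq k) = T := by
    have := hmono k le_rfl
    omega
  rw [hTa] at hsegk
  have hIcok : Finset.Icc (tseq k) T = Finset.Ico (tseq k) (tseq (k+1)) := by
    rw [← Finset.Ico_add_one_right_eq_Icc, htk]
  rw [hIcok] at hsegk
  have hQk := hQ k le_rfl
  set B : ℝ := (1/(N:ℝ)) * (α/((N:ℝ)-1))^k * (1-α)^(T - 1 - k) * Real.exp (-η * L)
    with hB
  have hBw : B ≤ w T (e k) := by
    have hpow : (1-α)^(T - 1 - k)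
        = (1-α)^(tseq k - 1 - k) * (1-α)^(T - tseq k) := by
      rw [← pow_add]
      congr 1
      have h1 := htlb k (by omega)
      have h2 := hmono k le_rfl
      omega
    have hEsum : Real.exp (-η * L)
        = Real.exp (-η * ∑ m ∈ Finset.range k,
            ∑ t ∈ Finset.Ico (tseq m) (tseq (m+1)), ℓ t (e m)) *
          Real.exp (-η * ∑ t ∈ Finset.Ico (tseq k) (tseq (k+1)), ℓ t (e k)) := by
      rw [← Real.exp_add, hL, Finset.sum_range_succ]
      congr 1
      ring
    have hfac : (0:ℝ) ≤ (1-α)^(T - tseq k) *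
        Real.exp (-η * ∑ t ∈ Finset.Ico (tseq k) (tseq (k+1)), ℓ t (e k)) :=
      mul_nonneg (pow_nonneg h1α.le _) (Real.exp_pos _).le
    calc B = ((1/(N:ℝ)) * (α/((N:ℝ)-1))^k * (1-α)^(tseq k - 1 - k) *
            Real.exp (-η * ∑ m ∈ Finset.range k,
              ∑ t ∈ Finset.Ico (tseq m) (tseq (m+1)), ℓ t (e m))) *
            ((1-α)^(T - tseq k) *
              Real.exp (-η * ∑ t ∈ Finset.Ico (tseq k) (tseq (k+1)), ℓ t (e k))) := by
          rw [hB, hpow, hEsum]; ring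
      _ ≤ wt (tseq k - 1) (e k) *
            ((1-α)^(T - tseq k) *
              Real.exp (-η * ∑ t ∈ Finset.Ico (tseq k) (tseq (k+1)), ℓ t (e k))) :=
          mul_le_mul_of_nonneg_right hQk hfac
      _ = wt (tseq k - 1) (e k) * (1-α)^(T - tseq k) *
            Real.exp (-η * ∑ t ∈ Finset.Ico (tseq k) (tseq (k+1)), ℓ t (e k)) := by ring
      _ ≤ w T (e k) := hsegk
  have hBpos : 0 < B := by
    rw [hB]
    positivity
  have hBW : B ≤ ∑ i, w T i := by
    refine hBw.trans ?_
    exact Finset.single_le_sum (f := w T) (fun j _ => (hwpos T (by omega) j).le)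
      (Finset.mem_univ _)
  -- telescoping
  set f : ℕ → ℝ := fun t => Real.log (∑ i, wt t i) with hf
  have hWtpos : ∀ t, (0:ℝ) < ∑ i, wt t i := fun t =>
    Finset.sum_pos (fun i _ => hwtpos t i) Finset.univ_nonempty
  have hWpos : ∀ t, 1 ≤ t → (0:ℝ) < ∑ i, w t i := fun t ht =>
    Finset.sum_pos (fun i _ => hwpos t ht i) Finset.univ_nonempty
  have hterm : ∀ s ∈ Finset.range T, ℓγ (s+1) ≤ (C/η) * (f s - f (s+1)) := by
    intro s hs
    have hsT : s + 1 ≤ T := by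
      simp only [Finset.mem_range] at hs
      omega
    have h1 := hlearner (s+1) (by omega) hsT
    simp only [Nat.add_sub_cancel] at h1
    have hlog : Real.log ((∑ i, w (s+1) i) / (∑ i, wt s i)) = f (s+1) - f s := by
      rw [Real.log_div (hWpos (s+1) (by omega)).ne' (hWtpos s).ne', hf]
      simp only
      rw [hWeq (s+1) (by omega)]
    rw [hlog] at h1
    linarith
  have htel : ∑ t ∈ Finset.Icc 1 T, ℓγ t ≤ (C/η) * (f 0 - f T) := by
    have hre : ∑ t ∈ Finset.Icc 1 T, ℓγ t = ∑ s ∈ Finset.range T, ℓγ (s+1) := by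
      rw [← Finset.Ico_add_one_right_eq_Icc, Finset.sum_Ico_eq_sum_range]
      simp only [Nat.add_sub_cancel, Nat.succ_sub_one]
      exact Finset.sum_congr rfl fun s _ => by rw [Nat.add_comm]
    rw [hre]
    calc ∑ s ∈ Finset.range T, ℓγ (s+1)
        ≤ ∑ s ∈ Finset.range T, (C/η) * (f s - f (s+1)) := Finset.sum_le_sum hterm
      _ = (C/η) * ∑ s ∈ Finset.range T, (f s - f (s+1)) := by rw [Finset.mul_sum]
      _ = (C/η) * (f 0 - f T) := by rw [Finset.sum_range_sub' f]
  have hf0 : f 0 = 0 := by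
    rw [hf]
    simp only
    have : ∑ i : Fin N, wt 0 i = 1 := by
      rw [Finset.sum_congr rfl (fun i _ => hinit i), Finset.sum_const,
        Finset.card_univ, Fintype.card_fin, nsmul_eq_mul]
      field_simp
    rw [this, Real.log_one]
  have hfT : Real.log B ≤ f T := by
    rw [hf]
    simp only
    rw [hWeq T (by omega)]
    exact Real.log_le_log hBpos hBW
  -- compute log B
  have hlogB : Real.log B = -Real.log N - k * Real.log (((N:ℝ)-1)/α)
      - ((T:ℝ) - 1 - k) * Real.log (1/(1-α)) - η * L := by
    rw [hB]
    rw [Real.log_mul (by positivity) (Real.exp_pos _).ne',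
      Real.log_mul (by positivity) (by positivity),
      Real.log_mul (by positivity) (by positivity),
      Real.log_exp, Real.log_pow, Real.log_pow]
    have h1 : Real.log (1/(N:ℝ)) = -Real.log N := by
      rw [one_div, Real.log_inv]
    have h2 : Real.log (α/((N:ℝ)-1)) = -Real.log (((N:ℝ)-1)/α) := by
      rw [Real.log_div hα0.ne' hN1.ne', Real.log_div hN1.ne' hα0.ne']
      ring
    have h3 : Real.log (1-α) = -Real.log (1/(1-α)) := by
      rw [one_div, Real.log_inv]
      ring
    have h4 : ((T - 1 - k : ℕ) : ℝ) = (T:ℝ) - 1 - k := by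
      have : T - 1 - k = T - (1 + k) := by omega
      rw [this, Nat.cast_sub (by omega)]
      push_cast
      ring
    rw [h1, h2, h3, h4]
    ring
  have hηC : 0 < C / η := div_pos hC hη
  have hfinal : (C/η) * (f 0 - f T) ≤ C * L +
      (C/η) * (Real.log N + k * Real.log (((N:ℝ)-1)/α) +
        ((T:ℝ) - 1 - k) * Real.log (1/(1-α))) := by
    have h5 : -(f T) ≤ -Real.log B := by linarith
    have h6 : (C/η) * (f 0 - f T) ≤ (C/η) * (-Real.log B) := by
      rw [hf0]
      have : f 0 - f T = -(f T) := by rw [hf0]; ring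
      calc (C/η) * (0 - f T) = (C/η) * (-(f T)) := by ring
        _ ≤ (C/η) * (-Real.log B) := mul_le_mul_of_nonneg_left h5 hηC.le
    refine h6.trans_eq ?_
    rw [hlogB]
    field_simp
    ring
  linarith
end

section
/- Let $\eta > 0$, $\alpha \in (0,1)$, $N \ge 2$, and nonnegative average losses $\ell_t(i)$. Define the Variable-share update $\tilde w_t(i) = (1-\alpha)^{\ell_t(i)} w_t(i) + \frac{1}{N-1} \sum_{j \ne i} \left(1 - (1-\alpha)^{\ell_t(j)}\right) w_t(j)$ with $w_t(i) = \tilde w_{t-1}(i) e^{-\eta \ell_t(i)}$ and all $\tilde w_{t-1}(i) > 0$. Then: (a) $\tilde w_t(i) \ge \tilde w_{t-1}(i) \left[e^{-\eta}(1-\alpha)\right]^{\ell_t(i)}$; and (b) if additionally $\ell_t(j) \in [0,1]$ for all $j$, then for any $j \ne i$, $\tilde w_t(i) \ge \tilde w_{t-1}(j) e^{-\eta \ell_t(j)} \frac{\alpha}{N-1} \ell_t(j)$. -/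
theorem variable_share_step_bounds (N : ℕ) (hN : 2 ≤ N) (η α : ℝ)
    (hη : 0 < η) (hα : α ∈ Set.Ioo (0:ℝ) 1)
    (ℓ : Fin N → ℝ) (hℓ : ∀ i, 0 ≤ ℓ i)
    (wprev w wnew : Fin N → ℝ) (hpos : ∀ i, 0 < wprev i)
    (hw : ∀ i, w i = wprev i * Real.exp (-η * ℓ i))
    (hnew : ∀ i, wnew i = (1 - α) ^ (ℓ i) * w i +
      (1 / ((N : ℝ) - 1)) * ∑ j ∈ Finset.univ \ {i}, (1 - (1 - α) ^ (ℓ j)) * w j) :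
    (∀ i, wnew i ≥ wprev i * (Real.exp (-η) * (1 - α)) ^ (ℓ i)) ∧
    ((∀ j, ℓ j ≤ 1) → ∀ i j, j ≠ i →
      wnew i ≥ wprev j * Real.exp (-η * ℓ j) * (α / ((N : ℝ) - 1)) * ℓ j) := by
  obtain ⟨hα0, hα1⟩ := hα
  have h1α : (0:ℝ) < 1 - α := by linarith
  have hNR : (0:ℝ) < (N : ℝ) - 1 := by
    have : (2:ℝ) ≤ (N : ℝ) := by exact_mod_cast hN
    linarith
  have hwpos : ∀ j, 0 < w j := fun j => by
    rw [hw j]; exact mul_pos (hpos j) (Real.exp_pos _)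
  have hterm : ∀ j, 0 ≤ (1 - (1 - α) ^ (ℓ j)) * w j := fun j => by
    have h1 : (1 - α) ^ (ℓ j) ≤ 1 := Real.rpow_le_one h1α.le (by linarith) (hℓ j)
    exact mul_nonneg (by linarith) (hwpos j).le
  have hsum : ∀ i, 0 ≤ ∑ j ∈ Finset.univ \ {i}, (1 - (1 - α) ^ (ℓ j)) * w j :=
    fun i => Finset.sum_nonneg fun j _ => hterm j
  constructor
  · intro i
    have key : wprev i * (Real.exp (-η) * (1 - α)) ^ (ℓ i) = (1 - α) ^ (ℓ i) * w i := by
      rw [hw i, Real.mul_rpow (Real.exp_pos _).le h1α.le, ← Real.exp_mul]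
      ring
    rw [hnew i, key]
    have := mul_nonneg (by positivity : (0:ℝ) ≤ 1 / ((N:ℝ) - 1)) (hsum i)
    linarith
  · intro hls i j hji
    have hmem : j ∈ Finset.univ \ {i} := by simp [hji]
    have hsingle : (1 - (1 - α) ^ (ℓ j)) * w j ≤
        ∑ k ∈ Finset.univ \ {i}, (1 - (1 - α) ^ (ℓ k)) * w k :=
      Finset.single_le_sum (fun k _ => hterm k) hmem
    have hbern : α * ℓ j ≤ 1 - (1 - α) ^ (ℓ j) := by
      have := rpow_one_add_le_one_add_mul_self (s := -α) (by linarith) (hℓ j) (hls j)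
      have h : (1 - α) ^ (ℓ j) ≤ 1 - ℓ j * α := by
        simpa [sub_eq_add_neg, mul_comm] using this
      nlinarith
    have hstep : α * ℓ j * w j ≤ (1 - (1 - α) ^ (ℓ j)) * w j :=
      mul_le_mul_of_nonneg_right hbern (hwpos j).le
    have hfirst : 0 ≤ (1 - α) ^ (ℓ i) * w i :=
      mul_nonneg (Real.rpow_nonneg h1α.le _) (hwpos i).le
    rw [hnew i]
    have hmul : (1 / ((N:ℝ) - 1)) * (α * ℓ j * w j) ≤
        (1 / ((N:ℝ) - 1)) * ∑ k ∈ Finset.univ \ {i}, (1 - (1 - α) ^ (ℓ k)) * w k :=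
      mul_le_mul_of_nonneg_left (hstep.trans hsingle) (by positivity)
    have heq : wprev j * Real.exp (-η * ℓ j) * (α / ((N : ℝ) - 1)) * ℓ j =
        (1 / ((N:ℝ) - 1)) * (α * ℓ j * w j) := by
      rw [hw j]; field_simp
    rw [heq]
    linarith
end

section
/- Let $\eta > 0$, $\alpha \in (0,1)$, $N \ge 2$, and let losses $\ell_r(p), \ell_r(q) \in [0,1]$ for $r = t, \dots, t'$. Suppose the Variable-share weight dynamics give, for each step $s \in [t, t']$, a transfer $a_s \ge \tilde w_{t-1}(p) \frac{\alpha}{N-1} \ell_s(p) e^{-\eta \sum_{r=t}^s \ell_r(p)} (1-\alpha)^{\sum_{r=t}^{s-1} \ell_r(p)}$ from expert $p$ to expert $q$, and that weights of expert $q$ decay by at most a factor $[e^{-\eta}(1-\alpha)]^{\ell}$ per unit loss $\ell$. If $\sum_{r=t}^{t'-1} \ell_r(p) < 1$ and $1 \le \sum_{r=t}^{t'} \ell_r(p) < 2$, then $\tilde w_{t'}(q) \ge \tilde w_{t-1}(p) \frac{\alpha}{N-1} e^{-\eta} (1-\alpha) \left[e^{-\eta}(1-\alpha)\right]^{\sum_{r=t}^{t'}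 \ell_r(q)}$. -/
open Finset Real

lemma amgm_key (b c d : ℝ) (hb0 : 0 < b) (hb1 : b ≤ 1)
    (hc0 : 0 ≤ c) (hc1 : c ≤ 1) (hd1 : d ≤ 1) (hcd : 1 ≤ c + d) :
    b ≤ b ^ c * (c + d * b ^ d) := by
  set e := 1 - c with he
  have he0 : 0 ≤ e := by linarith
  have hed : e ≤ d := by linarith
  have hd0 : 0 ≤ d := le_trans he0 hed
  have hgm : b ^ e ≤ c + e * b := by
    have := Real.geom_mean_le_arith_mean2_weighted hc0 he0 zero_le_one hb0.le (by ring)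
    simpa using this
  have hbd : b ≤ b ^ d := by
    calc b = b ^ (1:ℝ) := (Real.rpow_one b).symm
    _ ≤ b ^ d := Real.rpow_le_rpow_of_exponent_ge hb0 hb1 hd1
  have h1 : b ^ e ≤ c + d * b ^ d := by nlinarith
  calc b = b ^ c * b ^ e := by rw [← Real.rpow_add hb0]; simp [he]
  _ ≤ b ^ c * (c + d * b ^ d) :=
      mul_le_mul_of_nonneg_left h1 (Real.rpow_nonneg hb0.le c)

theorem variable_share_recovery (N : ℕ) (hN : 2 ≤ N) (η α : ℝ)
    (hη : 0 < η) (hα : α ∈ Set.Ioo (0:ℝ) 1)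
    (t t' : ℕ) (htt' : t ≤ t')
    (ℓp ℓq : ℕ → ℝ) (hℓp : ∀ r, ℓp r ∈ Set.Icc (0:ℝ) 1) (hℓq : ∀ r, ℓq r ∈ Set.Icc (0:ℝ) 1)
    (wp : ℝ) (hwp : 0 < wp)
    (a : ℕ → ℝ)
    (htransfer : ∀ s ∈ Finset.Icc t t',
      a s ≥ wp * (α / ((N : ℝ) - 1)) * ℓp s *
        Real.exp (-η * ∑ r ∈ Finset.Icc t s, ℓp r) *
        (1 - α) ^ (∑ r ∈ Finset.Ico t s, ℓp r))
    (wq : ℝ)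
    (hdecay : wq ≥ (∑ s ∈ Finset.Icc t t', a s) *
      (Real.exp (-η) * (1 - α)) ^ (∑ r ∈ Finset.Icc t t', ℓq r))
    (hsum1 : ∑ r ∈ Finset.Ico t t', ℓp r < 1)
    (hsum2 : 1 ≤ ∑ r ∈ Finset.Icc t t', ℓp r)
    (hsum3 : ∑ r ∈ Finset.Icc t t', ℓp r < 2) :
    wq ≥ wp * (α / ((N : ℝ) - 1)) * Real.exp (-η) * (1 - α) *
      (Real.exp (-η) * (1 - α)) ^ (∑ r ∈ Finset.Icc t t', ℓq r) := by
  obtain ⟨hα0, hα1⟩ := hα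
  have hN1 : (1:ℝ) ≤ (N:ℝ) - 1 := by
    have : (2:ℝ) ≤ (N:ℝ) := by exact_mod_cast hN
    linarith
  set c := α / ((N : ℝ) - 1) with hcdef
  have hc0 : 0 < c := div_pos hα0 (by linarith)
  have hwc : 0 ≤ wp * c := le_of_lt (mul_pos hwp hc0)
  set b := Real.exp (-η) * (1 - α) with hbdef
  have hexp1 : Real.exp (-η) ≤ 1 := Real.exp_le_one_iff.mpr (by linarith)
  have hb0 : 0 < b := mul_pos (Real.exp_pos _) (by linarith)
  have hb1 : b ≤ 1 := by nlinarith [Real.exp_pos (-η)]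
  set C := ∑ r ∈ Finset.Ico t t', ℓp r with hCdef
  set D := ℓp t' with hDdef
  have hC0 : 0 ≤ C := Finset.sum_nonneg fun r _ => (hℓp r).1
  have hsplit : ∑ r ∈ Finset.Icc t t', ℓp r = D + C := by
    rw [← Finset.Ico_insert_right htt', Finset.sum_insert (by simp)]
  have hD0 : 0 ≤ D := (hℓp t').1
  have hD1 : D ≤ 1 := (hℓp t').2
  -- per-term lower bounds
  have hbC : (0:ℝ) ≤ b ^ C := Real.rpow_nonneg hb0.le C
  have hterm : ∀ s ∈ Finset.Ico t t',
      wp * c * ℓp s * b ^ C ≤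
        wp * c * ℓp s * Real.exp (-η * ∑ r ∈ Finset.Icc t s, ℓp r) *
          (1 - α) ^ (∑ r ∈ Finset.Ico t s, ℓp r) := by
    intro s hs
    have hs' := Finset.mem_Ico.mp hs
    have hsub1 : Finset.Icc t s ⊆ Finset.Ico t t' := fun x hx => by
      have := Finset.mem_Icc.mp hx
      exact Finset.mem_Ico.mpr ⟨this.1, lt_of_le_of_lt this.2 hs'.2⟩
    have hsub2 : Finset.Ico t s ⊆ Finset.Ico t t' := fun x hx => by
      have := Finset.mem_Ico.mp hx
      exact Finset.mem_Ico.mpr ⟨this.1, lt_trans this.2 hs'.2⟩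
    have hL : ∑ r ∈ Finset.Icc t s, ℓp r ≤ C :=
      Finset.sum_le_sum_of_subset_of_nonneg hsub1 fun i _ _ => (hℓp i).1
    have hM : ∑ r ∈ Finset.Ico t s, ℓp r ≤ C :=
      Finset.sum_le_sum_of_subset_of_nonneg hsub2 fun i _ _ => (hℓp i).1
    have h1 : Real.exp (-η) ^ C ≤ Real.exp (-η * ∑ r ∈ Finset.Icc t s, ℓp r) := by
      rw [← Real.exp_mul]
      exact Real.exp_le_exp.mpr (by nlinarith)
    have h2 : (1 - α) ^ C ≤ (1 - α) ^ (∑ r ∈ Finset.Ico t s, ℓp r) :=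
      Real.rpow_le_rpow_of_exponent_ge (by linarith) (by linarith) hM
    have hbCeq : b ^ C = Real.exp (-η) ^ C * (1 - α) ^ C :=
      Real.mul_rpow (Real.exp_pos _).le (by linarith)
    have hmul : b ^ C ≤ Real.exp (-η * ∑ r ∈ Finset.Icc t s, ℓp r) *
        (1 - α) ^ (∑ r ∈ Finset.Ico t s, ℓp r) := by
      rw [hbCeq]
      exact mul_le_mul h1 h2 (Real.rpow_nonneg (by linarith) _) (Real.exp_pos _).le
    have hcoef : 0 ≤ wp * c * ℓp s := mul_nonneg hwc (hℓp s).1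
    calc wp * c * ℓp s * b ^ C
        ≤ wp * c * ℓp s * (Real.exp (-η * ∑ r ∈ Finset.Icc t s, ℓp r) *
            (1 - α) ^ (∑ r ∈ Finset.Ico t s, ℓp r)) :=
          mul_le_mul_of_nonneg_left hmul hcoef
      _ = _ := by ring
  -- bound for the last term
  have hlast : wp * c * D * (b ^ C * b ^ D) ≤
      wp * c * ℓp t' * Real.exp (-η * ∑ r ∈ Finset.Icc t t', ℓp r) *
        (1 - α) ^ (∑ r ∈ Finset.Ico t t', ℓp r) := by
    have hbD : b ^ D = Real.exp (-η) ^ D * (1 - α) ^ D :=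
      Real.mul_rpow (Real.exp_pos _).le (by linarith)
    have hbCeq : b ^ C = Real.exp (-η) ^ C * (1 - α) ^ C :=
      Real.mul_rpow (Real.exp_pos _).le (by linarith)
    have haD : (1 - α) ^ D ≤ 1 := Real.rpow_le_one (by linarith) (by linarith) hD0
    have hexpeq : Real.exp (-η * ∑ r ∈ Finset.Icc t t', ℓp r) =
        Real.exp (-η) ^ C * Real.exp (-η) ^ D := by
      rw [← Real.exp_mul, ← Real.exp_mul, ← Real.exp_add, hsplit]
      ring_nf
    rw [hsplit] at hexpeq ⊢
    rw [hexpeq, hbD, hbCeq]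
    have h1 : 0 ≤ Real.exp (-η) ^ C := Real.rpow_nonneg (Real.exp_pos _).le C
    have h2 : 0 ≤ Real.exp (-η) ^ D := Real.rpow_nonneg (Real.exp_pos _).le D
    have h3 : 0 ≤ (1 - α) ^ C := Real.rpow_nonneg (by linarith) C
    have h4 : 0 ≤ (1 - α) ^ D := Real.rpow_nonneg (by linarith) D
    have hcoef : 0 ≤ wp * c * D := mul_nonneg hwc hD0
    nlinarith [mul_nonneg (mul_nonneg h1 h3) h2, mul_nonneg hcoef (mul_nonneg (mul_nonneg h1 h3) h2)]
  -- total lower bound on the transferred weight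
  have hS : wp * c * b ≤ ∑ s ∈ Finset.Icc t t', a s := by
    have hA : ∑ s ∈ Finset.Icc t t',
        (wp * c * ℓp s * Real.exp (-η * ∑ r ∈ Finset.Icc t s, ℓp r) *
          (1 - α) ^ (∑ r ∈ Finset.Ico t s, ℓp r)) ≤ ∑ s ∈ Finset.Icc t t', a s :=
      Finset.sum_le_sum fun s hs => htransfer s hs
    have hsplitS : ∑ s ∈ Finset.Icc t t',
        (wp * c * ℓp s * Real.exp (-η * ∑ r ∈ Finset.Icc t s, ℓp r) *
          (1 - α) ^ (∑ r ∈ Finset.Ico t s, ℓp r)) =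
        (wp * c * ℓp t' * Real.exp (-η * ∑ r ∈ Finset.Icc t t', ℓp r) *
          (1 - α) ^ (∑ r ∈ Finset.Ico t t', ℓp r)) +
        ∑ s ∈ Finset.Ico t t',
          (wp * c * ℓp s * Real.exp (-η * ∑ r ∈ Finset.Icc t s, ℓp r) *
            (1 - α) ^ (∑ r ∈ Finset.Ico t s, ℓp r)) := by
      rw [← Finset.Ico_insert_right htt', Finset.sum_insert (by simp),
        Finset.Ico_insert_right htt']
    have hsumIco : ∑ s ∈ Finset.Ico t t', (wp * c * ℓp s * b ^ C) = wp * c * b ^ C * C := by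
      rw [← Finset.sum_mul, ← Finset.mul_sum]
      ring
    have hIco : wp * c * b ^ C * C ≤ ∑ s ∈ Finset.Ico t t',
        (wp * c * ℓp s * Real.exp (-η * ∑ r ∈ Finset.Icc t s, ℓp r) *
          (1 - α) ^ (∑ r ∈ Finset.Ico t s, ℓp r)) := by
      rw [← hsumIco]
      exact Finset.sum_le_sum hterm
    have hkey : b ≤ b ^ C * (C + D * b ^ D) :=
      amgm_key b C D hb0 hb1 hC0 hsum1.le hD1 (by linarith [hsplit, hsum2])
    have : wp * c * b ≤ wp * c * (b ^ C * (C + D * b ^ D)) :=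
      mul_le_mul_of_nonneg_left hkey hwc
    calc wp * c * b ≤ wp * c * (b ^ C * (C + D * b ^ D)) := this
      _ = wp * c * D * (b ^ C * b ^ D) + wp * c * b ^ C * C := by ring
      _ ≤ _ := by rw [hsplitS] at hA; linarith [add_le_add hlast hIco]
  -- conclude
  have hbq : (0:ℝ) ≤ b ^ (∑ r ∈ Finset.Icc t t', ℓq r) := Real.rpow_nonneg hb0.le _
  have h2 := mul_le_mul_of_nonneg_right hS hbq
  calc wp * c * Real.exp (-η) * (1 - α) * b ^ (∑ r ∈ Finset.Icc t t', ℓq r)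
      = wp * c * b * b ^ (∑ r ∈ Finset.Icc t t', ℓq r) := by rw [hbdef]; ring
    _ ≤ (∑ s ∈ Finset.Icc t t', a s) * b ^ (∑ r ∈ Finset.Icc t t', ℓq r) := h2
    _ ≤ wq := hdecay
end

section
/- Let $b = e^{-\eta}$ with $\eta > 0$, let $c = \sum_{s=t}^{t'-1} l_s$ with each $l_s \in [0,1]$ and $c < 1$, and let $d = l_{t'} \in (0,1]$ with $c + d \ge 1$. Then $\sum_{s=t}^{t'-1} l_s\, e^{-\eta c} + l_{t'} e^{-\eta(c+d)} = c b^c + d b^{c+d} = b^c(c + d b^d) \ge b = e^{-\eta}$. -/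
lemma key_est (b c d : ℝ) (hb0 : 0 < b) (hb1 : b < 1) (hc0 : 0 ≤ c) (hc1 : c < 1)
    (hd0 : 0 < d) (hd1 : d ≤ 1) (hcd : 1 ≤ c + d) :
    b ≤ c * b ^ c + d * b ^ (c + d) := by
  set X := b ^ c with hX
  set Y := b ^ (c + d) with hY
  have hXpos : 0 < X := Real.rpow_pos_of_pos hb0 _
  have hYpos : 0 < Y := Real.rpow_pos_of_pos hb0 _
  have hYX : Y ≤ X := Real.rpow_le_rpow_of_exponent_ge hb0 hb1.le (by linarith)
  -- convexity
  have hconv : d * b ≤ (c + d - 1) * X + (1 - c) * Y := by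
    have hmu : 0 < (1 - c) / d := div_pos (by linarith) hd0
    have hlam : 0 ≤ (c + d - 1) / d := by
      apply div_nonneg <;> linarith
    have hsum : (c + d - 1) / d + (1 - c) / d = 1 := by
      field_simp
      ring
    have hcv := convexOn_exp.2 (Set.mem_univ (c * Real.log b))
      (Set.mem_univ ((c + d) * Real.log b)) hlam hmu.le hsum
    simp only [smul_eq_mul] at hcv
    have hrw : (c + d - 1) / d * (c * Real.log b) + (1 - c) / d * ((c + d) * Real.log b)
        = 1 * Real.log b := by
      field_simp
      ring
    rw [hrw, one_mul, Real.exp_log hb0] at hcv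
    have hXe : X = Real.exp (c * Real.log b) := by
      rw [hX, Real.rpow_def_of_pos hb0, mul_comm]
    have hYe : Y = Real.exp ((c + d) * Real.log b) := by
      rw [hY, Real.rpow_def_of_pos hb0, mul_comm]
    rw [← hXe, ← hYe] at hcv
    calc d * b ≤ d * ((c + d - 1) / d * X + (1 - c) / d * Y) := by
          apply mul_le_mul_of_nonneg_left hcv hd0.le
      _ = (c + d - 1) * X + (1 - c) * Y := by field_simp
  nlinarith [mul_nonneg (mul_nonneg (by linarith : (0:ℝ) ≤ 1 - c) (by linarith : (0:ℝ) ≤ 1 - d)) (by linarith : (0:ℝ) ≤ X - Y), mul_nonneg (mul_nonneg hd0.le (by linarith : (0:ℝ) ≤ d - (1 - c))) hYpos.le]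

theorem lemma8_final_estimate (η : ℝ) (hη : 0 < η) (t t' : ℕ) (htt' : t ≤ t')
    (l : ℕ → ℝ) (hl : ∀ s, l s ∈ Set.Icc (0:ℝ) 1)
    (hc : ∑ s ∈ Finset.Ico t t', l s < 1)
    (hd : 0 < l t')
    (hcd : 1 ≤ (∑ s ∈ Finset.Ico t t', l s) + l t') :
    ((∑ s ∈ Finset.Ico t t', l s) * Real.exp (-η * (∑ s ∈ Finset.Ico t t', l s)) +
        l t' * Real.exp (-η * ((∑ s ∈ Finset.Ico t t', l s) + l t')) =
      Real.exp (-η) ^ (∑ s ∈ Finset.Ico t t', l s) *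
        ((∑ s ∈ Finset.Ico t t', l s) + l t' * Real.exp (-η) ^ (l t'))) ∧
    Real.exp (-η) ^ (∑ s ∈ Finset.Ico t t', l s) *
        ((∑ s ∈ Finset.Ico t t', l s) + l t' * Real.exp (-η) ^ (l t')) ≥
      Real.exp (-η) := by
  set c := ∑ s ∈ Finset.Ico t t', l s with hcdef
  set d := l t' with hddef
  have hc0 : 0 ≤ c := Finset.sum_nonneg fun s _ => (hl s).1
  have hd1 : d ≤ 1 := (hl t').2
  have hb0 : 0 < Real.exp (-η) := Real.exp_pos _
  have hb1 : Real.exp (-η) < 1 := Real.exp_lt_one_iff.mpr (by linarith)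
  have heq1 : Real.exp (-η * c) = Real.exp (-η) ^ c := by
    rw [← Real.exp_mul]
  have heq2 : Real.exp (-η * (c + d)) = Real.exp (-η) ^ (c + d) := by
    rw [← Real.exp_mul]
  have hsplit : Real.exp (-η) ^ (c + d) = Real.exp (-η) ^ c * Real.exp (-η) ^ d :=
    Real.rpow_add hb0 c d
  constructor
  · rw [heq1, heq2, hsplit]; ring
  · have := key_est (Real.exp (-η)) c d hb0 hb1 hc0 hc hd hd1 hcd
    rw [hsplit] at this
    linarith [this]
end

section
/- (Variable-share regret under delayed feedback.) With $N \ge 2$ experts, average losses $\ell_t(i) \in [0,1]$, $\eta > 0$, $\alpha \in (0,1)$, initial weights $\tilde w_0(i) = 1/N$, intermediate update $w_t(i) = \tilde w_{t-1}(i) e^{-\eta \ell_t(i)}$, and Variable-share update $\tilde w_t(i) = (1-\alpha)^{\ell_t(i)} w_t(i) + \frac{1}{N-1}\sum_{j\ne i}\left(1-(1-\alpha)^{\ell_t(j)}\right) w_t(j)$, suppose the learner's average loss satisfies $\sum_{t=1}^T \ell_t^{\gamma} \le -\frac{C}{\eta} \ln \tilde w_T(i)$ for all $i$, where $C > 0$.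 Then for any superexpert with switch times $1 = t_0 < \dots < t_{k+1} = T+1$ and experts $e_0,\dots,e_k$ ($e_j \ne e_{j+1}$), whose total average loss is $L = \sum_{j=0}^k \sum_{t=t_j}^{t_{j+1}-1} \ell_t(e_j)$, it holds that $\sum_{t=1}^T \ell_t^{\gamma} \le C\left(1 + \frac{1}{\eta}\ln\frac{1}{1-\alpha}\right) L + \frac{C}{\eta}\left(\ln N + k\left(\eta + \ln\frac{N-1}{\alpha(1-\alpha)}\right)\right)$. -/
open Real Finset

private lemma vs_chord (c : ℝ) {l : ℝ} (h0 : 0 ≤ l) (h1 : l ≤ 1) :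
    Real.exp (l * c) ≤ 1 - l + l * Real.exp c := by
  have h := convexOn_exp.2 (Set.mem_univ (0:ℝ)) (Set.mem_univ c)
    (by linarith : (0:ℝ) ≤ 1 - l) h0 (by ring)
  simpa using h

private lemma vs_pwmul (a η l : ℝ) (ha : 0 < a) (hη : 0 < η) (h0 : 0 ≤ l) (h1 : l ≤ 1) :
    exp (-(η+a)) * (1 - exp (-a)) * (1 - exp (-((η+a) * l))) ≤
      exp (-(η * l)) * (1 - exp (-(a * l))) * (1 - exp (-(η+a))) := by
  set b : ℝ := η + a with hb_def
  have hb : 0 < b := by positivity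
  -- A1 : chord for -a
  have A1 : l * (1 - exp (-a)) ≤ 1 - exp (-(a*l)) := by
    have h := vs_chord (-a) h0 h1
    have : exp (l * -a) = exp (-(a*l)) := by ring_nf
    rw [this] at h
    nlinarith [h]
  -- A2
  have A2 : exp (-(b*l)) ≤ exp (-(η*l)) := by
    apply Real.exp_le_exp.2
    nlinarith [mul_nonneg ha.le h0]
  -- A3 core
  have A3 : exp (-b) * (1 - exp (-(b*l))) ≤ exp (-(b*l)) * l * (1 - exp (-b)) := by
    have hchord := vs_chord b h0 h1
    have hx : (0:ℝ) < exp (-(b*l)) * exp (-b) := by positivity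
    have key := mul_le_mul_of_nonneg_left hchord hx.le
    have e1 : exp (-(b*l)) * exp (l*b) = 1 := by
      rw [← Real.exp_add]; ring_nf; exact Real.exp_zero
    have e2 : exp (-b) * exp b = 1 := by
      rw [← Real.exp_add]; ring_nf; exact Real.exp_zero
    have lhs_eq : exp (-(b*l)) * exp (-b) * exp (l*b) = exp (-b) := by
      rw [mul_right_comm, e1, one_mul]
    have rhs_eq : exp (-(b*l)) * exp (-b) * (1 - l + l * exp b)
        = exp (-(b*l)) * exp (-b) * (1 - l) + l * exp (-(b*l)) := by
      linear_combination (l * exp (-(b*l))) * e2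
    rw [lhs_eq, rhs_eq] at key
    nlinarith [key]
  -- assemble
  have hα' : (0:ℝ) ≤ 1 - exp (-a) := by
    have : exp (-a) ≤ 1 := Real.exp_le_one_iff.2 (by linarith)
    linarith
  have hb' : (0:ℝ) ≤ 1 - exp (-b) := by
    have : exp (-b) ≤ 1 := Real.exp_le_one_iff.2 (by linarith)
    linarith
  calc exp (-b) * (1 - exp (-a)) * (1 - exp (-(b * l)))
      = (exp (-b) * (1 - exp (-(b*l)))) * (1 - exp (-a)) := by ring
    _ ≤ (exp (-(b*l)) * l * (1 - exp (-b))) * (1 - exp (-a)) :=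
        mul_le_mul_of_nonneg_right A3 hα'
    _ = (exp (-(b*l)) * (l * (1 - exp (-a)))) * (1 - exp (-b)) := by ring
    _ ≤ (exp (-(η*l)) * (1 - exp (-(a*l)))) * (1 - exp (-b)) := by
        apply mul_le_mul_of_nonneg_right _ hb'
        apply mul_le_mul A2 A1 (by positivity) (Real.exp_pos _).le

private lemma vs_keysum (a η : ℝ) (ha : 0 < a) (hη : 0 < η) (g : ℕ → ℝ)
    (hg0 : ∀ r, 0 ≤ g r) (hg1 : ∀ r, g r ≤ 1) (d : ℕ)
    (hQ : 1 ≤ ∑ r ∈ range d, g r) :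
    exp (-(η+a)) * (1 - exp (-a)) ≤
      ∑ r ∈ range d, exp (-((η+a) * ∑ m ∈ range r, g m)) *
        (exp (-(η * g r)) * (1 - exp (-(a * g r)))) := by
  set b : ℝ := η + a with hb_def
  have hb : 0 < b := by positivity
  set q : ℕ → ℝ := fun r => ∑ m ∈ range r, g m with hq_def
  have hqsucc : ∀ r, q (r+1) = q r + g r := by
    intro r; simp [hq_def, Finset.sum_range_succ]
  have per : ∀ r, exp (-b) * (1 - exp (-a)) * (exp (-(b * q r)) - exp (-(b * q (r+1)))) ≤
      (exp (-(b * q r)) * (exp (-(η * g r)) * (1 - exp (-(a * g r))))) * (1 - exp (-b)) := by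
    intro r
    have hpw := vs_pwmul a η (g r) ha hη (hg0 r) (hg1 r)
    have hsplit : exp (-(b * q (r+1))) = exp (-(b * q r)) * exp (-(b * g r)) := by
      rw [← Real.exp_add, hqsucc r]; ring_nf
    rw [hsplit]
    have hpos : (0:ℝ) ≤ exp (-(b * q r)) := (Real.exp_pos _).le
    calc exp (-b) * (1 - exp (-a)) * (exp (-(b * q r)) - exp (-(b * q r)) * exp (-(b * g r)))
        = exp (-(b * q r)) * (exp (-b) * (1 - exp (-a)) * (1 - exp (-(b * g r)))) := by ring
      _ ≤ exp (-(b * q r)) * (exp (-(η * g r)) * (1 - exp (-(a * g r))) * (1 - exp (-b))) := by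
          apply mul_le_mul_of_nonneg_left _ hpos
          exact vs_pwmul a η (g r) ha hη (hg0 r) (hg1 r)
      _ = (exp (-(b * q r)) * (exp (-(η * g r)) * (1 - exp (-(a * g r))))) * (1 - exp (-b)) := by
          ring
  have hsum := Finset.sum_le_sum (fun r (_ : r ∈ range d) => per r)
  rw [← Finset.mul_sum, Finset.sum_range_sub' (fun r => exp (-(b * q r))), ← Finset.sum_mul] at hsum
  have hq0 : q 0 = 0 := by simp [hq_def]
  have hqd : exp (-(b * q d)) ≤ exp (-b) := by
    apply Real.exp_le_exp.2
    nlinarith [hQ]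
  have hb' : (0:ℝ) < 1 - exp (-b) := by
    have : exp (-b) < 1 := Real.exp_lt_one_iff.2 (by linarith)
    linarith
  have hstep : exp (-b) * (1 - exp (-a)) * (1 - exp (-b)) ≤
      exp (-b) * (1 - exp (-a)) * (exp (-(b * q 0)) - exp (-(b * q d))) := by
    have hea : exp (-a) ≤ 1 := Real.exp_le_one_iff.2 (by linarith)
    have hα' : (0:ℝ) ≤ exp (-b) * (1 - exp (-a)) := by nlinarith [Real.exp_pos (-b)]
    have hge : 1 - exp (-b) ≤ exp (-(b * q 0)) - exp (-(b * q d)) := by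
      rw [hq0]
      simp only [mul_zero, neg_zero, Real.exp_zero]
      linarith [hqd]
    exact mul_le_mul_of_nonneg_left hge hα'
  exact le_of_mul_le_mul_right (le_trans hstep hsum) hb'

theorem variable_share_regret (N T k : ℕ) (hN : 2 ≤ N) (η α C : ℝ)
    (hη : 0 < η) (hα : α ∈ Set.Ioo (0:ℝ) 1) (hC : 0 < C)
    (ℓ : ℕ → Fin N → ℝ) (hℓ : ∀ t i, ℓ t i ∈ Set.Icc (0:ℝ) 1)
    (w wt : ℕ → Fin N → ℝ)
    (hinit : ∀ i, wt 0 i = 1 / N)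
    (hw : ∀ t, 1 ≤ t → ∀ i, w t i = wt (t - 1) i * Real.exp (-η * ℓ t i))
    (hwt : ∀ t, 1 ≤ t → ∀ i,
      wt t i = (1 - α) ^ (ℓ t i) * w t i +
        (1 / ((N : ℝ) - 1)) * ∑ j ∈ Finset.univ \ {i}, (1 - (1 - α) ^ (ℓ t j)) * w t j)
    (ℓγ : ℕ → ℝ)
    (hlearner : ∀ i, ∑ t ∈ Finset.Icc 1 T, ℓγ t ≤ -(C / η) * Real.log (wt T i))
    (tseq : ℕ → ℕ) (e : ℕ → Fin N)
    (ht0 : tseq 0 = 1) (htk : tseq (k + 1) = T + 1)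
    (hmono : ∀ j, j ≤ k → tseq j < tseq (j + 1))
    (he : ∀ j, j < k → e j ≠ e (j + 1)) :
    ∑ t ∈ Finset.Icc 1 T, ℓγ t ≤
      C * (1 + (1 / η) * Real.log (1 / (1 - α))) *
        (∑ j ∈ Finset.range (k + 1), ∑ t ∈ Finset.Ico (tseq j) (tseq (j + 1)), ℓ t (e j)) +
      (C / η) * (Real.log N + k * (η + Real.log (((N : ℝ) - 1) / (α * (1 - α))))) := by
  obtain ⟨hα0, hα1⟩ := hα
  have h1α : (0:ℝ) < 1 - α := by linarith
  have hN2 : (2:ℝ) ≤ (N:ℝ) := by exact_mod_cast hN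
  have hN1 : (1:ℝ) ≤ (N:ℝ) - 1 := by linarith
  have hN1' : (0:ℝ) < (N:ℝ) - 1 := by linarith
  have hNpos : (0:ℝ) < (N:ℝ) := by linarith
  set a : ℝ := -Real.log (1 - α) with ha_def
  have ha : 0 < a := by
    have := Real.log_neg h1α (by linarith)
    rw [ha_def]; linarith
  set b : ℝ := η + a with hb_def
  have hb : 0 < b := by rw [hb_def]; linarith
  have hl0 : ∀ t i, 0 ≤ ℓ t i := fun t i => (hℓ t i).1
  have hl1 : ∀ t i, ℓ t i ≤ 1 := fun t i => (hℓ t i).2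
  have hrpow : ∀ t i, (1 - α) ^ (ℓ t i) = Real.exp (-(a * ℓ t i)) := by
    intro t i
    rw [Real.rpow_def_of_pos h1α, ha_def]
    ring_nf
  have hone : ∀ t i, 0 ≤ 1 - Real.exp (-(a * ℓ t i)) := by
    intro t i
    have : Real.exp (-(a * ℓ t i)) ≤ 1 :=
      Real.exp_le_one_iff.2 (neg_nonpos.2 (mul_nonneg ha.le (hl0 t i)))
    linarith
  clear_value a b
  -- positivity of weights
  have hpos : ∀ t (i : Fin N), 0 < wt t i := by
    intro t
    induction t with
    | zero => intro i; rw [hinit]; positivity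
    | succ n ih =>
      intro i
      have h1n : 1 ≤ n + 1 := Nat.le_add_left 1 n
      have hw' : ∀ j : Fin N, w (n+1) j = wt n j * Real.exp (-η * ℓ (n+1) j) := by
        intro j; rw [hw (n+1) h1n]; simp
      rw [hwt (n+1) h1n]
      have h1 : 0 < (1-α) ^ (ℓ (n+1) i) * w (n+1) i := by
        rw [hw' i]
        have h2 := Real.rpow_pos_of_pos h1α (ℓ (n+1) i)
        have h3 := ih i
        positivity
      have h2 : 0 ≤ (1 / ((N:ℝ)-1)) *
          ∑ j ∈ Finset.univ \ {i}, (1 - (1-α) ^ (ℓ (n+1) j)) * w (n+1) j := by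
        apply mul_nonneg (by positivity)
        apply Finset.sum_nonneg
        intro j _
        apply mul_nonneg
        · rw [hrpow]; exact hone (n+1) j
        · rw [hw' j]; exact mul_nonneg (ih j).le (Real.exp_pos _).le
      linarith
  -- combined one-step bound
  have hcomb : ∀ u (f i : Fin N), f ≠ i →
      Real.exp (-(b * ℓ (u+1) i)) * wt u i
        + (1 / ((N:ℝ)-1)) * ((1 - Real.exp (-(a * ℓ (u+1) f))) *
            (Real.exp (-(η * ℓ (u+1) f)) * wt u f)) ≤ wt (u+1) i := by
    intro u f i hfi
    have h1n : 1 ≤ u + 1 := Nat.le_add_left 1 u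
    have hw' : ∀ j : Fin N, w (u+1) j = wt u j * Real.exp (-η * ℓ (u+1) j) := by
      intro j; rw [hw (u+1) h1n]; simp
    rw [hwt (u+1) h1n]
    have hterm1 : Real.exp (-(b * ℓ (u+1) i)) * wt u i = (1-α) ^ (ℓ (u+1) i) * w (u+1) i := by
      rw [hw' i, hrpow]
      rw [show -(b * ℓ (u+1) i) = -(a * ℓ (u+1) i) + -η * ℓ (u+1) i by rw [hb_def]; ring,
        Real.exp_add]
      ring
    have hterm2 : (1 - Real.exp (-(a * ℓ (u+1) f))) * (Real.exp (-(η * ℓ (u+1) f)) * wt u f)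
        ≤ ∑ j ∈ Finset.univ \ {i}, (1 - (1-α) ^ (ℓ (u+1) j)) * w (u+1) j := by
      have hmem : f ∈ Finset.univ \ ({i} : Finset (Fin N)) := by
        simp [hfi]
      have := Finset.single_le_sum
        (f := fun j => (1 - (1-α) ^ (ℓ (u+1) j)) * w (u+1) j)
        (fun j _ => by
          apply mul_nonneg
          · rw [hrpow]; exact hone (u+1) j
          · rw [hw' j]; exact mul_nonneg (hpos u j).le (Real.exp_pos _).le) hmem
      beta_reduce at this
      refine le_trans (le_of_eq ?_) this
      rw [hrpow, hw' f]
      rw [show -η * ℓ (u+1) f = -(η * ℓ (u+1) f) by ring]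
      ring
    rw [hterm1]
    have := mul_le_mul_of_nonneg_left hterm2 (by positivity : (0:ℝ) ≤ 1 / ((N:ℝ)-1))
    linarith
  -- pure collapse one step
  have hstep : ∀ u (i : Fin N), Real.exp (-(b * ℓ (u+1) i)) * wt u i ≤ wt (u+1) i := by
    intro u i
    have h1n : 1 ≤ u + 1 := Nat.le_add_left 1 u
    have hw' : ∀ j : Fin N, w (u+1) j = wt u j * Real.exp (-η * ℓ (u+1) j) := by
      intro j; rw [hw (u+1) h1n]; simp
    rw [hwt (u+1) h1n]
    have hterm1 : Real.exp (-(b * ℓ (u+1) i)) * wt u i = (1-α) ^ (ℓ (u+1) i) * w (u+1) i := by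
      rw [hw' i, hrpow]
      rw [show -(b * ℓ (u+1) i) = -(a * ℓ (u+1) i) + -η * ℓ (u+1) i by rw [hb_def]; ring,
        Real.exp_add]
      ring
    have h2 : 0 ≤ (1 / ((N:ℝ)-1)) *
        ∑ j ∈ Finset.univ \ {i}, (1 - (1-α) ^ (ℓ (u+1) j)) * w (u+1) j := by
      apply mul_nonneg (by positivity)
      apply Finset.sum_nonneg
      intro j _
      apply mul_nonneg
      · rw [hrpow]; exact hone (u+1) j
      · rw [hw' j]; exact mul_nonneg (hpos u j).le (Real.exp_pos _).le
    linarith [le_of_eq hterm1]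
  -- collapsing over an interval
  have hcollapse : ∀ u (i : Fin N) (d : ℕ),
      Real.exp (-(b * ∑ r ∈ Finset.range d, ℓ (u+1+r) i)) * wt u i ≤ wt (u+d) i := by
    intro u i d
    induction d with
    | zero => simp
    | succ d ih =>
      calc Real.exp (-(b * ∑ r ∈ Finset.range (d+1), ℓ (u+1+r) i)) * wt u i
          = Real.exp (-(b * ℓ (u+1+d) i)) *
              (Real.exp (-(b * ∑ r ∈ Finset.range d, ℓ (u+1+r) i)) * wt u i) := by
            rw [Finset.sum_range_succ, mul_add, neg_add, Real.exp_add]; ring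
        _ ≤ Real.exp (-(b * ℓ (u+1+d) i)) * wt (u+d) i :=
            mul_le_mul_of_nonneg_left ih (Real.exp_pos _).le
        _ ≤ wt (u+(d+1)) i := by
            rw [show u+1+d = u+d+1 by omega]
            exact hstep (u+d) i
  -- accumulated transfer bound
  have haccum : ∀ u (f i : Fin N), f ≠ i → ∀ d : ℕ,
      Real.exp (-(b * ∑ r ∈ Finset.range d, ℓ (u+1+r) i)) *
        ((1 / ((N:ℝ)-1)) * wt u f *
          ∑ r ∈ Finset.range d, Real.exp (-(b * ∑ m ∈ Finset.range r, ℓ (u+1+m) f)) *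
            (Real.exp (-(η * ℓ (u+1+r) f)) * (1 - Real.exp (-(a * ℓ (u+1+r) f)))))
        ≤ wt (u+d) i := by
    intro u f i hfi d
    induction d with
    | zero => simpa using (hpos u i).le
    | succ d ih =>
      have hcomb' := hcomb (u+d) f i hfi
      rw [Finset.sum_range_succ, Finset.sum_range_succ, show u+1+d = u+d+1 by omega]
      set R := ∑ r ∈ Finset.range d, ℓ (u+1+r) i with hR_def
      set Q := ∑ m ∈ Finset.range d, ℓ (u+1+m) f with hQ_def
      set S := ∑ r ∈ Finset.range d, Real.exp (-(b * ∑ m ∈ Finset.range r, ℓ (u+1+m) f)) *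
            (Real.exp (-(η * ℓ (u+1+r) f)) * (1 - Real.exp (-(a * ℓ (u+1+r) f)))) with hS_def
      have hR0 : 0 ≤ R := Finset.sum_nonneg (fun r _ => hl0 _ _)
      have hQ0 : 0 ≤ Q := Finset.sum_nonneg (fun r _ => hl0 _ _)
      have hS0 : 0 ≤ S := by
        apply Finset.sum_nonneg
        intro r _
        exact mul_nonneg (Real.exp_pos _).le
          (mul_nonneg (Real.exp_pos _).le (hone _ _))
      have hcN : (0:ℝ) ≤ 1 / ((N:ℝ)-1) := by positivity
      have hg0 : 0 ≤ Real.exp (-(η * ℓ (u+d+1) f)) * (1 - Real.exp (-(a * ℓ (u+d+1) f))) :=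
        mul_nonneg (Real.exp_pos _).le (hone _ _)
      have hcol := hcollapse u f d
      rw [← hQ_def] at hcol
      clear_value R Q S
      calc Real.exp (-(b * (R + ℓ (u+d+1) i))) *
            ((1 / ((N:ℝ)-1)) * wt u f * (S + Real.exp (-(b * Q)) *
              (Real.exp (-(η * ℓ (u+d+1) f)) * (1 - Real.exp (-(a * ℓ (u+d+1) f))))))
          = Real.exp (-(b * ℓ (u+d+1) i)) * (Real.exp (-(b * R)) * ((1 / ((N:ℝ)-1)) * wt u f * S))
            + Real.exp (-(b * (R + ℓ (u+d+1) i))) *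
              ((1 / ((N:ℝ)-1)) * ((1 - Real.exp (-(a * ℓ (u+d+1) f))) *
                (Real.exp (-(η * ℓ (u+d+1) f)) * (Real.exp (-(b * Q)) * wt u f)))) := by
            rw [show -(b * (R + ℓ (u+d+1) i)) = -(b * ℓ (u+d+1) i) + -(b * R) by ring,
              Real.exp_add]
            ring
        _ ≤ Real.exp (-(b * ℓ (u+d+1) i)) * wt (u+d) i
            + 1 * ((1 / ((N:ℝ)-1)) * ((1 - Real.exp (-(a * ℓ (u+d+1) f))) *
                (Real.exp (-(η * ℓ (u+d+1) f)) * wt (u+d) f))) := by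
            apply add_le_add
            · exact mul_le_mul_of_nonneg_left ih (Real.exp_pos _).le
            · apply mul_le_mul
              · exact Real.exp_le_one_iff.2
                  (neg_nonpos.2 (mul_nonneg hb.le (add_nonneg hR0 (hl0 _ _))))
              · apply mul_le_mul_of_nonneg_left _ hcN
                apply mul_le_mul_of_nonneg_left _ (hone _ _)
                exact mul_le_mul_of_nonneg_left hcol (Real.exp_pos _).le
              · apply mul_nonneg hcN
                apply mul_nonneg (hone _ _)
                apply mul_nonneg (Real.exp_pos _).le
                exact mul_nonneg (Real.exp_pos _).le (hpos u f).le
              · exact zero_le_one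
        _ ≤ wt (u+(d+1)) i := by
            rw [one_mul]
            exact hcomb'
  -- lower bound on tseq
  have htlb : ∀ j, j ≤ k+1 → 1 ≤ tseq j := by
    intro j
    induction j with
    | zero => intro _; omega
    | succ j ih =>
      intro hj
      have h1 := ih (by omega)
      have h2 := hmono j (by omega)
      omega
  have hαN : α / ((N:ℝ)-1) ≤ 1 := by rw [div_le_one hN1']; linarith
  have hαN0 : (0:ℝ) < α / ((N:ℝ)-1) := div_pos hα0 hN1'
  have hexpb1 : Real.exp (-b) ≤ 1 := Real.exp_le_one_iff.2 (by linarith)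
  -- main induction over segments
  have hmain : ∀ j, j ≤ k → ∃ f : Fin N,
      (1/(N:ℝ)) * Real.exp (-(b * ((∑ m ∈ Finset.range (j+1),
          ∑ t ∈ Finset.Ico (tseq m) (tseq (m+1)), ℓ t (e m)) + (j:ℝ)))) *
        (α/((N:ℝ)-1))^j ≤ wt (tseq (j+1) - 1) f := by
    intro j
    induction j with
    | zero =>
      intro _
      refine ⟨e 0, ?_⟩
      have h1 : 1 ≤ tseq 1 := htlb 1 (by omega)
      have hc := hcollapse 0 (e 0) (tseq 1 - 1)
      rw [hinit] at hc
      rw [show 0 + (tseq 1 - 1) = tseq (0+1) - 1 by norm_num] at hc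
      have hsum_eq : ∑ m ∈ Finset.range (0+1), ∑ t ∈ Finset.Ico (tseq m) (tseq (m+1)), ℓ t (e m)
          = ∑ r ∈ Finset.range (tseq 1 - 1), ℓ (0+1+r) (e 0) := by
        rw [Finset.sum_range_one, Finset.sum_Ico_eq_sum_range, ht0]
      rw [hsum_eq]
      refine le_trans (le_of_eq ?_) hc
      push_cast
      rw [add_zero, pow_zero, mul_one, mul_comm]
    | succ j ih =>
      intro hj
      obtain ⟨f, hf⟩ := ih (by omega)
      have h1 : 1 ≤ tseq (j+1) := htlb _ (by omega)
      have h2 : tseq (j+1) < tseq (j+1+1) := hmono (j+1) hj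
      set u := tseq (j+1) - 1 with hu_def
      set d := tseq (j+1+1) - tseq (j+1) with hd_def
      have hu1 : u + 1 = tseq (j+1) := by omega
      have hud : u + d = tseq (j+1+1) - 1 := by omega
      set Λ : ℝ := ∑ m ∈ Finset.range (j+1), ∑ t ∈ Finset.Ico (tseq m) (tseq (m+1)), ℓ t (e m)
        with hΛ_def
      set ρ : ℝ := ∑ t ∈ Finset.Ico (tseq (j+1)) (tseq (j+1+1)), ℓ t (e (j+1)) with hρ_def
      have hρ0 : 0 ≤ ρ := Finset.sum_nonneg (fun t _ => hl0 _ _)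
      have hρ_eq : ρ = ∑ r ∈ Finset.range d, ℓ (u+1+r) (e (j+1)) := by
        rw [hρ_def, Finset.sum_Ico_eq_sum_range, ← hd_def, ← hu1]
      have hexpρ : Real.exp (-(b * ρ)) ≤ 1 :=
        Real.exp_le_one_iff.2 (neg_nonpos.2 (mul_nonneg hb.le hρ0))
      rw [Finset.sum_range_succ]
      push_cast
      rw [← hΛ_def, ← hρ_def]
      clear_value Λ ρ
      by_cases hfe : f = e (j+1)
      · refine ⟨f, ?_⟩
        have hc := hcollapse u f d
        rw [hud] at hc
        have hSg : ∑ r ∈ Finset.range d, ℓ (u+1+r) f = ρ := by rw [hfe]; exact hρ_eq.symm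
        rw [hSg] at hc
        refine le_trans ?_ hc
        have hexpand : (1/(N:ℝ)) * Real.exp (-(b * ((Λ+ρ) + ((j:ℝ)+1)))) * (α/((N:ℝ)-1))^(j+1)
            = (((1/(N:ℝ)) * Real.exp (-(b*(Λ+(j:ℝ)))) * (α/((N:ℝ)-1))^j) *
                (Real.exp (-b) * (α/((N:ℝ)-1)))) * Real.exp (-(b*ρ)) := by
          rw [show -(b * ((Λ+ρ) + ((j:ℝ)+1))) = -(b*(Λ+(j:ℝ))) + (-b + -(b*ρ)) by ring,
            Real.exp_add, Real.exp_add, pow_succ]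
          ring
        rw [hexpand]
        have hle1 : Real.exp (-b) * (α/((N:ℝ)-1)) ≤ 1 := by
          have h := mul_le_mul hexpb1 hαN hαN0.le zero_le_one
          simpa using h
        calc (((1/(N:ℝ)) * Real.exp (-(b*(Λ+(j:ℝ)))) * (α/((N:ℝ)-1))^j) *
                (Real.exp (-b) * (α/((N:ℝ)-1)))) * Real.exp (-(b*ρ))
            ≤ (wt u f * 1) * Real.exp (-(b*ρ)) := by
              apply mul_le_mul_of_nonneg_right _ (Real.exp_pos _).le
              apply mul_le_mul hf hle1 _ (hpos u f).le
              positivity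
          _ = Real.exp (-(b*ρ)) * wt u f := by ring
      · by_cases hq : 1 ≤ ∑ r ∈ Finset.range d, ℓ (u+1+r) f
        · refine ⟨e (j+1), ?_⟩
          have hacc := haccum u f (e (j+1)) hfe d
          rw [hud, ← hρ_eq] at hacc
          have hks := vs_keysum a η ha hη (fun r => ℓ (u+1+r) f)
            (fun r => hl0 _ _) (fun r => hl1 _ _) d hq
          beta_reduce at hks
          rw [← hb_def] at hks
          have hαa : 1 - Real.exp (-a) = α := by
            rw [ha_def, neg_neg, Real.exp_log h1α]; ring
          rw [hαa] at hks
          refine le_trans ?_ hacc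
          have hexpand : (1/(N:ℝ)) * Real.exp (-(b * ((Λ+ρ) + ((j:ℝ)+1)))) * (α/((N:ℝ)-1))^(j+1)
              = Real.exp (-(b*ρ)) * ((1/((N:ℝ)-1)) *
                  ((1/(N:ℝ)) * Real.exp (-(b*(Λ+(j:ℝ)))) * (α/((N:ℝ)-1))^j) *
                  (Real.exp (-b) * α)) := by
            rw [show -(b * ((Λ+ρ) + ((j:ℝ)+1))) = -(b*(Λ+(j:ℝ))) + (-b + -(b*ρ)) by ring,
              Real.exp_add, Real.exp_add, pow_succ]
            ring
          rw [hexpand]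
          refine mul_le_mul_of_nonneg_left ?_ (Real.exp_pos _).le
          have h2' : (0:ℝ) ≤ Real.exp (-b) * α := by positivity
          exact mul_le_mul (mul_le_mul_of_nonneg_left hf (by positivity)) hks h2'
            (mul_nonneg (by positivity) (hpos u f).le)
        · refine ⟨f, ?_⟩
          rw [not_le] at hq
          have hSg0 : 0 ≤ ∑ r ∈ Finset.range d, ℓ (u+1+r) f :=
            Finset.sum_nonneg (fun r _ => hl0 _ _)
          have hc := hcollapse u f d
          rw [hud] at hc
          refine le_trans ?_ hc
          have hqe : Real.exp (-b) ≤ Real.exp (-(b * ∑ r ∈ Finset.range d, ℓ (u+1+r) f)) := by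
            apply Real.exp_le_exp.2
            have h := mul_le_mul_of_nonneg_left hq.le hb.le
            rw [mul_one] at h
            linarith [h]
          have hexpand : (1/(N:ℝ)) * Real.exp (-(b * ((Λ+ρ) + ((j:ℝ)+1)))) * (α/((N:ℝ)-1))^(j+1)
              = (((1/(N:ℝ)) * Real.exp (-(b*(Λ+(j:ℝ)))) * (α/((N:ℝ)-1))^j) *
                  (Real.exp (-(b*ρ)) * (α/((N:ℝ)-1)))) * Real.exp (-b) := by
            rw [show -(b * ((Λ+ρ) + ((j:ℝ)+1))) = -(b*(Λ+(j:ℝ))) + (-(b*ρ) + -b) by ring,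
              Real.exp_add, Real.exp_add, pow_succ]
            ring
          rw [hexpand]
          have hle1 : Real.exp (-(b*ρ)) * (α/((N:ℝ)-1)) ≤ 1 := by
            have h := mul_le_mul hexpρ hαN hαN0.le zero_le_one
            simpa using h
          calc (((1/(N:ℝ)) * Real.exp (-(b*(Λ+(j:ℝ)))) * (α/((N:ℝ)-1))^j) *
                  (Real.exp (-(b*ρ)) * (α/((N:ℝ)-1)))) * Real.exp (-b)
              ≤ (wt u f * 1) * Real.exp (-(b * ∑ r ∈ Finset.range d, ℓ (u+1+r) f)) := by
                apply mul_le_mul _ hqe (Real.exp_pos _).le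
                  (mul_nonneg (hpos u f).le zero_le_one)
                apply mul_le_mul hf hle1 _ (hpos u f).le
                positivity
            _ = Real.exp (-(b * ∑ r ∈ Finset.range d, ℓ (u+1+r) f)) * wt u f := by ring
  -- conclusion
  obtain ⟨f, hf⟩ := hmain k le_rfl
  rw [show tseq (k+1) - 1 = T by omega] at hf
  set L : ℝ := ∑ m ∈ Finset.range (k+1), ∑ t ∈ Finset.Ico (tseq m) (tseq (m+1)), ℓ t (e m)
    with hL_def
  have hWpos : (0:ℝ) < (1/(N:ℝ)) * Real.exp (-(b * (L + (k:ℝ)))) * (α/((N:ℝ)-1))^k := by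
    have h3 : (0:ℝ) < (α/((N:ℝ)-1))^k := pow_pos hαN0 k
    have h4 : (0:ℝ) < 1/(N:ℝ) := by positivity
    have h5 := Real.exp_pos (-(b * (L + (k:ℝ))))
    positivity
  have hlog := Real.log_le_log hWpos hf
  have hCη : (0:ℝ) ≤ C/η := by positivity
  have hmono' : -(C/η) * Real.log (wt T f) ≤
      -(C/η) * Real.log ((1/(N:ℝ)) * Real.exp (-(b * (L + (k:ℝ)))) * (α/((N:ℝ)-1))^k) := by
    have h := mul_le_mul_of_nonneg_left hlog hCη
    linarith [h]
  refine le_trans (hlearner f) (le_trans hmono' (le_of_eq ?_))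
  have hlogW : Real.log ((1/(N:ℝ)) * Real.exp (-(b * (L + (k:ℝ)))) * (α/((N:ℝ)-1))^k)
      = -Real.log N + (-(b*(L+(k:ℝ)))) + (k:ℝ) * (Real.log α - Real.log ((N:ℝ)-1)) := by
    rw [Real.log_mul (by positivity) (by positivity),
      Real.log_mul (by positivity) (Real.exp_pos _).ne', Real.log_exp, Real.log_pow,
      Real.log_div hα0.ne' hN1'.ne', one_div, Real.log_inv]
  rw [hlogW]
  rw [show (1:ℝ)/(1-α) = (1-α)⁻¹ from one_div _, Real.log_inv,
    Real.log_div hN1'.ne' (by positivity : α * (1-α) ≠ 0),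
    Real.log_mul hα0.ne' h1α.ne']
  rw [hb_def, ha_def]
  field_simp
  ring
end

section
/- Let $\hat L > 0$, $\hat k > 0$, and $\hat\alpha = \hat k/(2\hat k + \hat L)$. If $\hat k \le \hat L$, then for any $L \le \hat L$ and $k \ge 0$: $L \ln\frac{1}{1-\hat\alpha} + k \ln\frac{1}{\hat\alpha(1-\hat\alpha)} \le \hat k + k\ln\frac{9}{2} + k \ln\frac{\hat L}{\hat k}$. -/
theorem corollary_vs_case_k_le_L (Lhat khat : ℝ) (hL : 0 < Lhat) (hk : 0 < khat)
    (hkL : khat ≤ Lhat) (L k : ℝ) (hLle : L ≤ Lhat) (hk0 : 0 ≤ k) :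
    L * Real.log (1 / (1 - khat / (2 * khat + Lhat))) +
        k * Real.log (1 / ((khat / (2 * khat + Lhat)) * (1 - khat / (2 * khat + Lhat)))) ≤
      khat + k * Real.log (9 / 2) + k * Real.log (Lhat / khat) := by
  have hD : (0:ℝ) < 2 * khat + Lhat := by linarith
  have hS : (0:ℝ) < khat + Lhat := by linarith
  have hsub : 1 - khat / (2 * khat + Lhat) = (khat + Lhat) / (2 * khat + Lhat) := by
    field_simp; ring
  have h1 : 1 / (1 - khat / (2 * khat + Lhat)) = (2 * khat + Lhat) / (khat + Lhat) := by
    rw [hsub, one_div_div]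
  have h2 : 1 / ((khat / (2 * khat + Lhat)) * (1 - khat / (2 * khat + Lhat)))
      = (2 * khat + Lhat) ^ 2 / ((khat + Lhat) * khat) := by
    rw [hsub, div_mul_div_comm, one_div_div, eq_div_iff (by positivity)]
    field_simp
  rw [h1, h2]
  -- First term
  have hx : (0:ℝ) < (2 * khat + Lhat) / (khat + Lhat) := by positivity
  have hlog1 : Real.log ((2 * khat + Lhat) / (khat + Lhat))
      ≤ (2 * khat + Lhat) / (khat + Lhat) - 1 := Real.log_le_sub_one_of_pos hx
  have hlog1pos : 0 ≤ Real.log ((2 * khat + Lhat) / (khat + Lhat)) := by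
    apply Real.log_nonneg
    rw [le_div_iff₀ hS]; linarith
  have hterm1 : L * Real.log ((2 * khat + Lhat) / (khat + Lhat)) ≤ khat := by
    calc L * Real.log ((2 * khat + Lhat) / (khat + Lhat))
        ≤ Lhat * Real.log ((2 * khat + Lhat) / (khat + Lhat)) := by
          exact mul_le_mul_of_nonneg_right hLle hlog1pos
      _ ≤ Lhat * ((2 * khat + Lhat) / (khat + Lhat) - 1) := by
          exact mul_le_mul_of_nonneg_left hlog1 hL.le
      _ = Lhat * khat / (khat + Lhat) := by
          have h3 : (2 * khat + Lhat) / (khat + Lhat) - 1 = khat / (khat + Lhat) := by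
            rw [div_sub_one hS.ne']; congr 1; ring
          rw [h3, mul_div_assoc]
      _ ≤ khat := by
          rw [div_le_iff₀ hS]; nlinarith
  -- Second term
  have hineq : (2 * khat + Lhat) ^ 2 / ((khat + Lhat) * khat)
      ≤ (9 / 2) * (Lhat / khat) := by
    rw [div_le_iff₀ (by positivity)]
    have : (2 * khat + Lhat) ^ 2 ≤ 9 / 2 * ((khat + Lhat) * Lhat) := by nlinarith
    calc (2 * khat + Lhat) ^ 2 ≤ 9 / 2 * ((khat + Lhat) * Lhat) := this
      _ = 9 / 2 * (Lhat / khat) * ((khat + Lhat) * khat) := by field_simp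
  have hlog2 : Real.log ((2 * khat + Lhat) ^ 2 / ((khat + Lhat) * khat))
      ≤ Real.log ((9 / 2) * (Lhat / khat)) := by
    apply Real.log_le_log (by positivity) hineq
  have hterm2 : k * Real.log ((2 * khat + Lhat) ^ 2 / ((khat + Lhat) * khat))
      ≤ k * Real.log (9 / 2) + k * Real.log (Lhat / khat) := by
    have := mul_le_mul_of_nonneg_left hlog2 hk0
    rw [Real.log_mul (by norm_num) (by positivity)] at this
    linarith [this]
  linarith
end

section
/- Let $\hat L > 0$, $\hat k > 0$, and $\hat\alpha = \hat k/(2\hat k + \hat L)$. If $\hat k \ge \hat L$, then for any $L \le \hat L$ and $k \ge 0$: $L \ln\frac{1}{1-\hat\alpha} + k \ln\frac{1}{\hat\alpha(1-\hat\alpha)} \le \frac{1}{2}\hat k + k \ln\frac{9}{2}$. -/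
theorem corollary_vs_case_k_ge_L (Lhat khat : ℝ) (hL : 0 < Lhat) (hk : 0 < khat)
    (hkL : Lhat ≤ khat) (L k : ℝ) (hLle : L ≤ Lhat) (hk0 : 0 ≤ k) :
    L * Real.log (1 / (1 - khat / (2 * khat + Lhat))) +
        k * Real.log (1 / ((khat / (2 * khat + Lhat)) * (1 - khat / (2 * khat + Lhat)))) ≤
      (1 / 2) * khat + k * Real.log (9 / 2) := by
  have hs : 0 < 2 * khat + Lhat := by linarith
  have hsum : 0 < khat + Lhat := by linarith
  have h1a : 1 - khat / (2 * khat + Lhat) = (khat + Lhat) / (2 * khat + Lhat) := by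
    field_simp; ring
  rw [h1a]
  have hA : 1 / ((khat + Lhat) / (2 * khat + Lhat)) = (2 * khat + Lhat) / (khat + Lhat) := by
    field_simp
  have hB : 1 / (khat / (2 * khat + Lhat) * ((khat + Lhat) / (2 * khat + Lhat)))
      = (2 * khat + Lhat) ^ 2 / (khat * (khat + Lhat)) := by
    field_simp
  rw [hA, hB]
  have hx : (1:ℝ) ≤ (2 * khat + Lhat) / (khat + Lhat) := by
    rw [le_div_iff₀ hsum]; linarith
  have hlogpos : 0 ≤ Real.log ((2 * khat + Lhat) / (khat + Lhat)) :=
    Real.log_nonneg hx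
  -- first term
  have h1 : L * Real.log ((2 * khat + Lhat) / (khat + Lhat)) ≤ (1 / 2) * khat := by
    have hle : L * Real.log ((2 * khat + Lhat) / (khat + Lhat))
        ≤ Lhat * Real.log ((2 * khat + Lhat) / (khat + Lhat)) :=
      mul_le_mul_of_nonneg_right hLle hlogpos
    have hlog : Real.log ((2 * khat + Lhat) / (khat + Lhat))
        ≤ (2 * khat + Lhat) / (khat + Lhat) - 1 :=
      Real.log_le_sub_one_of_pos (by positivity)
    have h2 : (2 * khat + Lhat) / (khat + Lhat) - 1 = khat / (khat + Lhat) := by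
      field_simp; ring
    have h3 : Lhat * (khat / (khat + Lhat)) ≤ (1 / 2) * khat := by
      rw [← mul_div_assoc, div_le_iff₀ hsum]
      nlinarith
    calc L * Real.log ((2 * khat + Lhat) / (khat + Lhat))
        ≤ Lhat * Real.log ((2 * khat + Lhat) / (khat + Lhat)) := hle
      _ ≤ Lhat * (khat / (khat + Lhat)) := by
          apply mul_le_mul_of_nonneg_left _ hL.le
          rw [h2] at hlog; exact hlog
      _ ≤ (1 / 2) * khat := h3
  -- second term
  have h2 : k * Real.log ((2 * khat + Lhat) ^ 2 / (khat * (khat + Lhat)))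
      ≤ k * Real.log (9 / 2) := by
    apply mul_le_mul_of_nonneg_left _ hk0
    apply Real.log_le_log (by positivity)
    rw [div_le_div_iff₀ (by positivity) (by norm_num)]
    nlinarith
  linarith
end
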